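/- arXiv:1903.01607 — 7 statements merged into one kernel-verified Lean document; each statement's English description precedes it below -/
import Mathlib

section
/- Let h : ℝⁿ → ℝ satisfy h(λx) = λ h(x) and h(x + y) ≤ h(x) + h(y) for all x, y ∈ ℝⁿ and λ ≥ 0 (i.e., h is sublinear). Then the set A_h = {t ∈ ℝⁿ : ⟨t, x⟩ ≤ h(x) for all x ∈ ℝⁿ} is a nonempty compact convex subset of ℝⁿ whose support function equals h, i.e., sup_{a ∈ A_h} ⟨a, x⟩ = h(x) for all x ∈ ℝⁿ. -/
open scoped RealInnerProductSpace

theorem stmt6 {n : ℕ} (h : EuclideanSpace ℝ (Fin n) → ℝ)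
    (hpos : ∀ lam : ℝ, 0 ≤ lam → ∀ x, h (lam • x) = lam * h x)
    (hsub : ∀ x y, h (x + y) ≤ h x + h y) :
    ({t : EuclideanSpace ℝ (Fin n) | ∀ x, ⟪t, x⟫ ≤ h x}).Nonempty ∧
    IsCompact {t : EuclideanSpace ℝ (Fin n) | ∀ x, ⟪t, x⟫ ≤ h x} ∧
    Convex ℝ {t : EuclideanSpace ℝ (Fin n) | ∀ x, ⟪t, x⟫ ≤ h x} ∧
    ∀ x, sSup ((fun a => ⟪a, x⟫) '' {t : EuclideanSpace ℝ (Fin n) | ∀ y, ⟪t, y⟫ ≤ h y})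
      = h x := by
  set A : Set (EuclideanSpace ℝ (Fin n)) :=
    {t : EuclideanSpace ℝ (Fin n) | ∀ x, ⟪t, x⟫ ≤ h x} with hA
  have h0 : h 0 = 0 := by simpa using hpos 0 le_rfl 0
  -- key: for every x₀ there is t ∈ A attaining h x₀
  have key : ∀ x₀ : EuclideanSpace ℝ (Fin n), ∃ t ∈ A, ⟪t, x₀⟫ = h x₀ := by
    intro x₀
    have ext : ∃ g : EuclideanSpace ℝ (Fin n) →ₗ[ℝ] ℝ, g x₀ = h x₀ ∧ ∀ x, g x ≤ h x := by
      rcases eq_or_ne x₀ 0 with rfl | hx₀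
      · obtain ⟨g, -, hle⟩ := exists_extension_of_le_sublinear ⟨⊥, 0⟩ h
          (fun c hc x => hpos c hc.le x) hsub (by
            rintro ⟨x, hx⟩
            simp only [Submodule.mem_bot] at hx
            subst hx
            simp [h0])
        exact ⟨g, by simp [h0], hle⟩
      · have hf : ∀ x : (LinearPMap.mkSpanSingleton (K := ℝ) (σ := RingHom.id ℝ) x₀ (h x₀) hx₀).domain,
            (LinearPMap.mkSpanSingleton (K := ℝ) (σ := RingHom.id ℝ) x₀ (h x₀) hx₀) x ≤ h x := by
          rintro ⟨x, hx⟩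
          rcases Submodule.mem_span_singleton.mp hx with ⟨c, rfl⟩
          rw [show ((LinearPMap.mkSpanSingleton (K := ℝ) (σ := RingHom.id ℝ) x₀ (h x₀) hx₀) ⟨c • x₀, hx⟩ : ℝ)
              = c • h x₀ from LinearPMap.mkSpanSingleton'_apply x₀ (h x₀) _ c hx]
          rcases le_or_gt 0 c with hc | hc
          · rw [hpos c hc]; simp [smul_eq_mul]
          · have h1 : (0:ℝ) ≤ h (c • x₀) + (-c) * h x₀ := by
              have := hsub (c • x₀) ((-c) • x₀)
              rw [hpos (-c) (by linarith)] at this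
              have h2 : c • x₀ + (-c) • x₀ = 0 := by
                rw [← add_smul]; simp
              rw [h2, h0] at this
              linarith
            simp only [smul_eq_mul]
            nlinarith
        obtain ⟨g, heq, hle⟩ := exists_extension_of_le_sublinear
          (LinearPMap.mkSpanSingleton (K := ℝ) (σ := RingHom.id ℝ) x₀ (h x₀) hx₀) h
          (fun c hc x => hpos c hc.le x) hsub hf
        refine ⟨g, ?_, hle⟩
        have := heq ⟨x₀, Submodule.mem_span_singleton_self x₀⟩
        rwa [LinearPMap.mkSpanSingleton_apply ℝ ℝ (σ := RingHom.id ℝ) hx₀ (h x₀)] at this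
    obtain ⟨g, hgx, hgle⟩ := ext
    set t : EuclideanSpace ℝ (Fin n) :=
      (InnerProductSpace.toDual ℝ (EuclideanSpace ℝ (Fin n))).symm
        (LinearMap.toContinuousLinearMap g) with ht
    have htapp : ∀ y, ⟪t, y⟫ = g y := by
      intro y
      rw [ht, InnerProductSpace.toDual_symm_apply]
      rfl
    exact ⟨t, fun y => (htapp y).le.trans (hgle y), by rw [htapp, hgx]⟩
  obtain ⟨t₀, ht₀, -⟩ := key 0
  have hne : A.Nonempty := ⟨t₀, ht₀⟩
  have hconv : ConvexOn ℝ Set.univ h := by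
    refine ⟨convex_univ, fun x _ y _ a b ha hb hab => ?_⟩
    calc h (a • x + b • y) ≤ h (a • x) + h (b • y) := hsub _ _
    _ = a * h x + b * h y := by rw [hpos a ha, hpos b hb]
    _ = a • h x + b • h y := rfl
  have hcont : Continuous h :=
    continuousOn_univ.mp (hconv.continuousOn isOpen_univ)
  obtain ⟨C, hC⟩ : ∃ C : ℝ, ∀ x ∈ Metric.closedBall (0 : EuclideanSpace ℝ (Fin n)) 1, h x ≤ C := by
    obtain ⟨C, hC⟩ := (isCompact_closedBall (0 : EuclideanSpace ℝ (Fin n)) 1).bddAbove_image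
      hcont.continuousOn
    exact ⟨C, fun x hx => hC ⟨x, hx, rfl⟩⟩
  have hbdd : ∀ t ∈ A, ‖t‖ ≤ max C 0 := by
    intro t htA
    rcases eq_or_ne t 0 with rfl | htne
    · simp [le_max_iff]
    · have hn : 0 < ‖t‖ := norm_pos_iff.mpr htne
      have h1 : ⟪t, (‖t‖⁻¹ : ℝ) • t⟫ ≤ h ((‖t‖⁻¹ : ℝ) • t) := htA _
      have h2 : h ((‖t‖⁻¹ : ℝ) • t) ≤ C := by
        apply hC
        simp only [Metric.mem_closedBall, dist_zero_right, norm_smul, Real.norm_eq_abs,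
          abs_of_nonneg (inv_nonneg.mpr hn.le)]
        rw [inv_mul_cancel₀ hn.ne']
      have h3 : ⟪t, (‖t‖⁻¹ : ℝ) • t⟫ = ‖t‖ := by
        rw [real_inner_smul_right, real_inner_self_eq_norm_sq]
        field_simp
      have : ‖t‖ ≤ C := by rw [← h3]; exact h1.trans h2
      exact this.trans (le_max_left _ _)
  have hclosed : IsClosed A := by
    have : A = ⋂ x : EuclideanSpace ℝ (Fin n), {t : EuclideanSpace ℝ (Fin n) | ⟪t, x⟫ ≤ h x} := by
      ext t; simp [hA, Set.mem_iInter]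
    rw [this]
    exact isClosed_iInter fun x =>
      isClosed_le (continuous_id.inner continuous_const) continuous_const
  have hcpt : IsCompact A :=
    Metric.isCompact_of_isClosed_isBounded hclosed
      ((Metric.isBounded_iff_subset_closedBall 0).mpr
        ⟨max C 0, fun t ht => by simpa [Metric.mem_closedBall] using hbdd t ht⟩)
  refine ⟨hne, hcpt, ?_, ?_⟩
  · intro s hs u hu a b ha hb hab x
    have hsum := add_le_add (mul_le_mul_of_nonneg_left (hs x) ha)
      (mul_le_mul_of_nonneg_left (hu x) hb)
    calc ⟪a • s + b • u, x⟫ = a * ⟪s, x⟫ + b * ⟪u, x⟫ := by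
          rw [inner_add_left, real_inner_smul_left, real_inner_smul_left]
    _ ≤ a * h x + b * h x := hsum
    _ = h x := by rw [← add_mul, hab, one_mul]
  · intro x
    obtain ⟨t, htA, hteq⟩ := key x
    refine le_antisymm (csSup_le (hne.image _) ?_) ?_
    · rintro r ⟨s, hs, rfl⟩
      exact hs x
    · rw [← hteq]
      exact le_csSup ⟨h x, by rintro r ⟨s, hs, rfl⟩; exact hs x⟩ ⟨t, htA, rfl⟩
end

section
/- Let {A_α : α ∈ [0,1]} be a family of subsets of ℝⁿ. There exists a fuzzy vector u : ℝⁿ → [0,1] (regular, compactly supported, quasi-concave, upper semi-continuous) with u_α = A_α for all α ∈ [0,1] if and only if: (L1) each A_α is a nonempty compact convex subset of ℝⁿ; (L2) A_α ⊇ A_β whenever 0 ≤ α < β ≤ 1; (L3) A_{α₀} = ⋂_{k≥1} A_{α_k} for each increasing sequence {α_k} ⊆ [0,1] converging to α₀ > 0; (L4) A_0 is the closure of ⋃_{α ∈ (0,1]} A_α. In that case u is unique, given by u(t) = sup{α : t ∈ A_α}. -/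
open scoped RealInnerProductSpace Pointwise

noncomputable section

/-- A fuzzy vector: regular, compactly supported, quasi-concave, upper semi-continuous
function `u : ℝⁿ → [0,1]`. -/
def IsFuzzyVector {n : ℕ} (u : EuclideanSpace ℝ (Fin n) → ℝ) : Prop :=
  (∀ t, u t ∈ Set.Icc (0:ℝ) 1) ∧
  (∃ t, u t = 1) ∧
  IsCompact (closure {t | 0 < u t}) ∧
  (∀ s t : EuclideanSpace ℝ (Fin n), ∀ lam ∈ Set.Icc (0:ℝ) 1,
      min (u s) (u t) ≤ u (lam • s + (1 - lam) • t)) ∧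
  (∀ α : ℝ, IsClosed {t | α ≤ u t})

/-- The α-level sets of a fuzzy vector. -/
def levelSet {n : ℕ} (u : EuclideanSpace ℝ (Fin n) → ℝ) (α : ℝ) :
    Set (EuclideanSpace ℝ (Fin n)) :=
  if α = 0 then closure {t | 0 < u t} else {t | α ≤ u t}

/-- The support function of a fuzzy vector. -/
def fuzzySupp {n : ℕ} (u : EuclideanSpace ℝ (Fin n) → ℝ) (α : ℝ)
    (x : EuclideanSpace ℝ (Fin n)) : ℝ :=
  sSup ((fun t => ⟪t, x⟫) '' levelSet u α)

/-- Addition of fuzzy vectors by Zadeh's extension principle. -/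
def fuzzyAdd {n : ℕ} (v w : EuclideanSpace ℝ (Fin n) → ℝ) :
    EuclideanSpace ℝ (Fin n) → ℝ :=
  fun t => sSup {m : ℝ | ∃ r s, r + s = t ∧ m = min (v r) (w s)}

/-- the candidate representation function -/
def repFun {n : ℕ} (A : ℝ → Set (EuclideanSpace ℝ (Fin n))) :
    EuclideanSpace ℝ (Fin n) → ℝ :=
  fun t => sSup {α : ℝ | α ∈ Set.Icc (0:ℝ) 1 ∧ t ∈ A α}

lemma repFun_mem_Icc {n : ℕ} (A : ℝ → Set (EuclideanSpace ℝ (Fin n))) (t) :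
    repFun A t ∈ Set.Icc (0:ℝ) 1 := by
  constructor
  · exact Real.sSup_nonneg (fun x hx => hx.1.1)
  · exact Real.sSup_le (fun x hx => hx.1.2) zero_le_one

lemma bddS {n : ℕ} (A : ℝ → Set (EuclideanSpace ℝ (Fin n))) (t) :
    BddAbove {α : ℝ | α ∈ Set.Icc (0:ℝ) 1 ∧ t ∈ A α} :=
  ⟨1, fun x hx => hx.1.2⟩

/-- The formula for u in terms of the level sets. -/
lemma formula_aux {n : ℕ} (A : ℝ → Set (EuclideanSpace ℝ (Fin n)))
    (u : EuclideanSpace ℝ (Fin n) → ℝ) (hu : IsFuzzyVector u)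
    (hA : ∀ α ∈ Set.Icc (0:ℝ) 1, levelSet u α = A α) (t : EuclideanSpace ℝ (Fin n)) :
    u t = sSup {α : ℝ | α ∈ Set.Icc (0:ℝ) 1 ∧ t ∈ A α} := by
  obtain ⟨hbound, -, -, -, -⟩ := hu
  have hmem : ∀ α : ℝ, 0 < α → α ≤ 1 → (t ∈ A α ↔ α ≤ u t) := by
    intro α h0 h1
    rw [← hA α ⟨h0.le, h1⟩, levelSet, if_neg h0.ne']
    rfl
  apply le_antisymm
  · rcases eq_or_lt_of_le (hbound t).1 with h0 | h0
    · rw [← h0]; exact Real.sSup_nonneg (fun x hx => hx.1.1)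
    · apply le_csSup (bddS A t)
      exact ⟨⟨(hbound t).1, (hbound t).2⟩, (hmem (u t) h0 (hbound t).2).mpr le_rfl⟩
  · refine Real.sSup_le (fun α hα => ?_) (hbound t).1
    rcases eq_or_lt_of_le hα.1.1 with h0 | h0
    · exact h0 ▸ (hbound t).1
    · exact (hmem α h0 hα.1.2).mp hα.2

lemma repFun_le_iff {n : ℕ} (A : ℝ → Set (EuclideanSpace ℝ (Fin n)))
    (hL2 : ∀ α β : ℝ, 0 ≤ α → α < β → β ≤ 1 → A β ⊆ A α)
    (hL3 : ∀ (a : ℕ → ℝ) (α₀ : ℝ), (∀ k, a k ∈ Set.Icc (0:ℝ) 1) → Monotone a →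
          0 < α₀ → α₀ ≤ 1 → Filter.Tendsto a Filter.atTop (nhds α₀) →
          A α₀ = ⋂ k : ℕ, A (a k))
    {β : ℝ} (hβ0 : 0 < β) (hβ1 : β ≤ 1) (t : EuclideanSpace ℝ (Fin n)) :
    β ≤ repFun A t ↔ t ∈ A β := by
  constructor
  · intro hle
    -- t ∈ A α for all 0 < α < β
    have hall : ∀ α : ℝ, 0 < α → α < β → t ∈ A α := by
      intro α h0 hαβ
      have : ∃ γ ∈ {γ : ℝ | γ ∈ Set.Icc (0:ℝ) 1 ∧ t ∈ A γ}, α < γ := by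
        by_contra h
        push_neg at h
        have : repFun A t ≤ α := Real.sSup_le (fun x hx => h x hx) h0.le
        linarith
      obtain ⟨γ, ⟨⟨-, hγ1⟩, hγA⟩, hαγ⟩ := this
      exact hL2 α γ h0.le hαγ hγ1 hγA
    -- use L3 with the sequence β - β/(k+2), which increases to β
    set a : ℕ → ℝ := fun k => β - β / ((k:ℝ) + 2) with ha
    have hak : ∀ k, 0 < a k ∧ a k < β := by
      intro k
      have h1 : β / ((k:ℝ) + 2) < β := div_lt_self hβ0 (by have : (0:ℝ) ≤ k := Nat.cast_nonneg k; linarith)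
      have h2 : 0 < β / ((k:ℝ) + 2) := by positivity
      exact ⟨by simp only [ha]; linarith, by simp only [ha]; linarith⟩
    have hmono : Monotone a := by
      intro i j hij
      have : β / ((j:ℝ) + 2) ≤ β / ((i:ℝ) + 2) := by
        apply div_le_div_of_nonneg_left hβ0.le (by positivity)
        have : (i:ℝ) ≤ (j:ℝ) := Nat.cast_le.mpr hij
        linarith
      simp only [ha]
      linarith
    have htend : Filter.Tendsto a Filter.atTop (nhds β) := by
      have h0 : Filter.Tendsto (fun k : ℕ => β / ((k:ℝ) + 2)) Filter.atTop (nhds 0) := by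
        have h1 : Filter.Tendsto (fun k:ℕ => (k:ℝ)+2) Filter.atTop Filter.atTop :=
          Filter.tendsto_atTop_add_const_right _ 2 tendsto_natCast_atTop_atTop
        have h := h1.inv_tendsto_atTop.const_mul β
        rw [mul_zero] at h
        simpa [div_eq_mul_inv] using h
      have := (tendsto_const_nhds (x := β) (f := Filter.atTop (α := ℕ))).sub h0
      simpa using this
    have hbd : ∀ k, a k ∈ Set.Icc (0:ℝ) 1 :=
      fun k => ⟨(hak k).1.le, ((hak k).2.le.trans hβ1)⟩
    rw [hL3 a β hbd hmono hβ0 hβ1 htend]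
    exact Set.mem_iInter.mpr fun k => hall (a k) (hak k).1 (hak k).2
  · intro hmem
    exact le_csSup (bddS A t) ⟨⟨hβ0.le, hβ1⟩, hmem⟩

lemma repFun_props {n : ℕ} (A : ℝ → Set (EuclideanSpace ℝ (Fin n)))
    (hL1 : ∀ α ∈ Set.Icc (0:ℝ) 1, (A α).Nonempty ∧ IsCompact (A α) ∧ Convex ℝ (A α))
    (hL2 : ∀ α β : ℝ, 0 ≤ α → α < β → β ≤ 1 → A β ⊆ A α)
    (hL3 : ∀ (a : ℕ → ℝ) (α₀ : ℝ), (∀ k, a k ∈ Set.Icc (0:ℝ) 1) → Monotone a →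
          0 < α₀ → α₀ ≤ 1 → Filter.Tendsto a Filter.atTop (nhds α₀) →
          A α₀ = ⋂ k : ℕ, A (a k))
    (hL4 : A 0 = closure (⋃ α ∈ Set.Ioc (0:ℝ) 1, A α)) :
    IsFuzzyVector (repFun A) ∧ ∀ α ∈ Set.Icc (0:ℝ) 1, levelSet (repFun A) α = A α := by
  set u := repFun A with hu
  have hiff : ∀ β : ℝ, 0 < β → β ≤ 1 → ∀ t, (β ≤ u t ↔ t ∈ A β) :=
    fun β h0 h1 t => repFun_le_iff A hL2 hL3 h0 h1 t
  have hbound : ∀ t, u t ∈ Set.Icc (0:ℝ) 1 := repFun_mem_Icc A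
  -- support inclusion
  have hsubs : {t | 0 < u t} ⊆ A 0 := by
    intro t ht
    have hne : ∃ α ∈ {α : ℝ | α ∈ Set.Icc (0:ℝ) 1 ∧ t ∈ A α}, 0 < α := by
      by_contra h
      push_neg at h
      have : u t ≤ 0 := Real.sSup_le (fun x hx => h x hx) le_rfl
      exact absurd ht (by simp only [Set.mem_setOf_eq]; linarith)
    obtain ⟨α, ⟨⟨hα0, hα1⟩, hmem⟩, hαpos⟩ := hne
    rw [hL4]
    exact subset_closure (Set.mem_biUnion ⟨hαpos, hα1⟩ hmem)
  have hA0closed : IsClosed (A 0) := (hL1 0 ⟨le_rfl, zero_le_one⟩).2.1.isClosed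
  have hclsub : closure {t | 0 < u t} ⊆ A 0 := closure_minimal hsubs hA0closed
  -- regularity
  obtain ⟨t₀, ht₀⟩ := (hL1 1 ⟨zero_le_one, le_rfl⟩).1
  have hreg : u t₀ = 1 :=
    le_antisymm (hbound t₀).2 ((hiff 1 one_pos le_rfl t₀).mpr ht₀)
  -- quasi-concavity
  have hqc : ∀ s t : EuclideanSpace ℝ (Fin n), ∀ lam ∈ Set.Icc (0:ℝ) 1,
      min (u s) (u t) ≤ u (lam • s + (1 - lam) • t) := by
    intro s t lam hlam
    set m := min (u s) (u t) with hm
    rcases le_or_gt m 0 with h0 | h0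
    · exact h0.trans (hbound _).1
    · have hm1 : m ≤ 1 := (min_le_left _ _).trans (hbound s).2
      have hs : s ∈ A m := (hiff m h0 hm1 s).mp (min_le_left _ _)
      have ht : t ∈ A m := (hiff m h0 hm1 t).mp (min_le_right _ _)
      have hc : lam • s + (1 - lam) • t ∈ A m :=
        (hL1 m ⟨h0.le, hm1⟩).2.2 hs ht hlam.1 (by linarith [hlam.2]) (by ring)
      exact (hiff m h0 hm1 _).mpr hc
  -- upper semicontinuity
  have husc : ∀ α : ℝ, IsClosed {t | α ≤ u t} := by
    intro α
    rcases le_or_gt α 0 with h0 | h0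
    · have : {t | α ≤ u t} = Set.univ :=
        Set.eq_univ_of_forall (fun t => h0.trans (hbound t).1)
      rw [this]; exact isClosed_univ
    rcases le_or_gt α 1 with h1 | h1
    · have : {t | α ≤ u t} = A α := Set.ext (fun t => hiff α h0 h1 t)
      rw [this]; exact (hL1 α ⟨h0.le, h1⟩).2.1.isClosed
    · have : {t | α ≤ u t} = ∅ := by
        ext t; simp only [Set.mem_setOf_eq, Set.mem_empty_iff_false, iff_false, not_le]
        exact (hbound t).2.trans_lt h1
      rw [this]; exact isClosed_empty
  -- level sets
  have hlev : ∀ α ∈ Set.Icc (0:ℝ) 1, levelSet u α = A α := by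
    intro α ⟨h0, h1⟩
    rcases eq_or_lt_of_le h0 with hz | hz
    · rw [levelSet, if_pos hz.symm, ← hz]
      refine le_antisymm hclsub ?_
      rw [hL4]
      apply closure_mono
      intro t ht
      simp only [Set.mem_iUnion, exists_prop] at ht
      obtain ⟨β, ⟨hβ0, hβ1⟩, hmem⟩ := ht
      exact lt_of_lt_of_le hβ0 ((hiff β hβ0 hβ1 t).mpr hmem)
    · rw [levelSet, if_neg hz.ne']
      exact Set.ext (fun t => hiff α hz h1 t)
  exact ⟨⟨hbound, ⟨t₀, hreg⟩,
    (hL1 0 ⟨le_rfl, zero_le_one⟩).2.1.of_isClosed_subset isClosed_closure hclsub,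
    hqc, husc⟩, hlev⟩

lemma forward_props {n : ℕ} (A : ℝ → Set (EuclideanSpace ℝ (Fin n)))
    (u : EuclideanSpace ℝ (Fin n) → ℝ) (hu : IsFuzzyVector u)
    (hA : ∀ α ∈ Set.Icc (0:ℝ) 1, levelSet u α = A α) :
    ((∀ α ∈ Set.Icc (0:ℝ) 1, (A α).Nonempty ∧ IsCompact (A α) ∧ Convex ℝ (A α)) ∧
       (∀ α β : ℝ, 0 ≤ α → α < β → β ≤ 1 → A β ⊆ A α) ∧
       (∀ (a : ℕ → ℝ) (α₀ : ℝ), (∀ k, a k ∈ Set.Icc (0:ℝ) 1) → Monotone a →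
          0 < α₀ → α₀ ≤ 1 → Filter.Tendsto a Filter.atTop (nhds α₀) →
          A α₀ = ⋂ k : ℕ, A (a k)) ∧
       (A 0 = closure (⋃ α ∈ Set.Ioc (0:ℝ) 1, A α))) := by
  obtain ⟨hbound, ⟨t₀, ht₀⟩, hcpt, hqc, husc⟩ := hu
  have hAα : ∀ α : ℝ, 0 < α → α ≤ 1 → A α = {t | α ≤ u t} := by
    intro α h0 h1
    rw [← hA α ⟨h0.le, h1⟩, levelSet, if_neg h0.ne']
  have hA0 : A 0 = closure {t | 0 < u t} := by
    rw [← hA 0 ⟨le_rfl, zero_le_one⟩, levelSet, if_pos rfl]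
  have hsupp : ∀ α : ℝ, 0 < α → {t | α ≤ u t} ⊆ closure {t | 0 < u t} :=
    fun α h0 t ht => subset_closure (h0.trans_le ht)
  have hconvlvl : ∀ α : ℝ, Convex ℝ {t | α ≤ u t} := by
    intro α s hs t ht a b ha hb hab
    have hb' : b = 1 - a := by linarith
    subst hb'
    exact le_trans (le_min hs ht) (hqc s t a ⟨ha, by linarith⟩)
  have hconv0 : Convex ℝ {t | 0 < u t} := by
    intro s hs t ht a b ha hb hab
    have hb' : b = 1 - a := by linarith
    subst hb'
    exact lt_of_lt_of_le (lt_min hs ht) (hqc s t a ⟨ha, by linarith⟩)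
  refine ⟨?_, ?_, ?_, ?_⟩
  · -- L1
    rintro α ⟨h0, h1⟩
    rcases eq_or_lt_of_le h0 with hz | hz
    · rw [← hz, hA0]
      exact ⟨⟨t₀, subset_closure (by simp only [Set.mem_setOf_eq, ht₀]; norm_num)⟩,
        hcpt, hconv0.closure⟩
    · rw [hAα α hz h1]
      exact ⟨⟨t₀, by simp only [Set.mem_setOf_eq, ht₀]; exact h1⟩,
        hcpt.of_isClosed_subset (husc α) (hsupp α hz), hconvlvl α⟩
  · -- L2
    intro α β h0 hαβ hβ1
    rcases eq_or_lt_of_le h0 with hz | hz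
    · rw [← hz, hA0, hAα β (hz ▸ hαβ) hβ1]
      exact hsupp β (hz ▸ hαβ)
    · rw [hAα α hz (le_of_lt (lt_of_lt_of_le hαβ hβ1)), hAα β (hz.trans hαβ) hβ1]
      exact fun t ht => le_trans hαβ.le ht
  · -- L3
    intro a α₀ hak hmono h0 h1 htend
    have hup : ∀ k, a k ≤ α₀ := hmono.ge_of_tendsto htend
    ext t
    simp only [Set.mem_iInter]
    rw [hAα α₀ h0 h1]
    constructor
    · intro ht k
      rcases eq_or_lt_of_le (hup k) with he | hlt
      · rw [he, hAα α₀ h0 h1]; exact ht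
      · rcases eq_or_lt_of_le (hak k).1 with hz | hz
        · rw [← hz, hA0]; exact hsupp α₀ h0 ht
        · rw [hAα (a k) hz ((hup k).trans h1)]
          exact le_trans hlt.le ht
    · intro ht
      have hev : ∀ᶠ k in Filter.atTop, 0 < a k := htend.eventually (eventually_gt_nhds h0)
      refine le_of_tendsto htend ?_
      filter_upwards [hev] with k hk
      have := ht k
      rw [hAα (a k) hk ((hup k).trans h1)] at this
      exact this
  · -- L4
    rw [hA0]
    have : {t | 0 < u t} = ⋃ α ∈ Set.Ioc (0:ℝ) 1, A α := by
      ext t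
      simp only [Set.mem_setOf_eq, Set.mem_iUnion, exists_prop]
      constructor
      · intro h
        exact ⟨u t, ⟨h, (hbound t).2⟩, by rw [hAα (u t) h (hbound t).2]; exact le_refl (u t)⟩
      · rintro ⟨α, ⟨hα0, hα1⟩, hmem⟩
        rw [hAα α hα0 hα1] at hmem
        exact lt_of_lt_of_le hα0 hmem
    rw [this]

theorem stmt10 {n : ℕ} (A : ℝ → Set (EuclideanSpace ℝ (Fin n))) :
    ((∃! u : EuclideanSpace ℝ (Fin n) → ℝ,
        IsFuzzyVector u ∧ ∀ α ∈ Set.Icc (0:ℝ) 1, levelSet u α = A α) ↔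
      ((∀ α ∈ Set.Icc (0:ℝ) 1, (A α).Nonempty ∧ IsCompact (A α) ∧ Convex ℝ (A α)) ∧
       (∀ α β : ℝ, 0 ≤ α → α < β → β ≤ 1 → A β ⊆ A α) ∧
       (∀ (a : ℕ → ℝ) (α₀ : ℝ), (∀ k, a k ∈ Set.Icc (0:ℝ) 1) → Monotone a →
          0 < α₀ → α₀ ≤ 1 → Filter.Tendsto a Filter.atTop (nhds α₀) →
          A α₀ = ⋂ k : ℕ, A (a k)) ∧
       (A 0 = closure (⋃ α ∈ Set.Ioc (0:ℝ) 1, A α)))) ∧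
    (∀ u : EuclideanSpace ℝ (Fin n) → ℝ,
      IsFuzzyVector u → (∀ α ∈ Set.Icc (0:ℝ) 1, levelSet u α = A α) →
      ∀ t, u t = sSup {α : ℝ | α ∈ Set.Icc (0:ℝ) 1 ∧ t ∈ A α}) := by
  constructor
  · constructor
    · rintro ⟨u, ⟨hu, hA⟩, -⟩
      exact forward_props A u hu hA
    · rintro ⟨hL1, hL2, hL3, hL4⟩
      obtain ⟨hfuzzy, hlev⟩ := repFun_props A hL1 hL2 hL3 hL4
      refine ⟨repFun A, ⟨hfuzzy, hlev⟩, ?_⟩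
      rintro v ⟨hv, hvA⟩
      funext t
      rw [formula_aux A v hv hvA t]
      rfl
  · intro u hu hA t
    exact formula_aux A u hu hA t
end
end

section
/- A function h : [0,1] × S^{n−1} → ℝ is the support function of a (unique) fuzzy vector if and only if: (VS1) for each α ∈ [0,1], h(α, −) extends to a sublinear function on ℝⁿ; and (VS2) for each x ∈ S^{n−1}, h(−, x) : [0,1] → ℝ is non-increasing, left-continuous on (0,1], and right-continuous at 0. The fuzzy vector is then given by u(t) = sup{α : ⟨t, x⟩ ≤ h(α, x) for all x ∈ S^{n−1}}. -/
open scoped RealInnerProductSpace Pointwise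

noncomputable section

variable {n : ℕ}
local notation "E" => EuclideanSpace ℝ (Fin n)

namespace FuzzyAux

lemma cont_inner (x : E) : Continuous (fun t : E => ⟪t, x⟫) :=
  continuous_inner.comp (continuous_id.prodMk continuous_const)

lemma bddAbove_inner_image {K : Set E} (hK : IsCompact K) (x : E) :
    BddAbove ((fun t => ⟪t, x⟫) '' K) :=
  (hK.image (cont_inner x)).bddAbove

lemma exists_inner_eq_sSup {K : Set E} (hK : IsCompact K) (hne : K.Nonempty) (x : E) :
    ∃ t ∈ K, ⟪t, x⟫ = sSup ((fun t => ⟪t, x⟫) '' K) ∧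
      ∀ s ∈ K, ⟪s, x⟫ ≤ ⟪t, x⟫ := by
  obtain ⟨t, htK, hmax⟩ := hK.exists_isMaxOn hne ((cont_inner x).continuousOn)
  refine ⟨t, htK, le_antisymm (le_csSup (bddAbove_inner_image hK x) ⟨t, htK, rfl⟩)
    (csSup_le (hne.image _) (by rintro _ ⟨s, hs, rfl⟩; exact hmax hs)), fun s hs => hmax hs⟩

lemma bddAbove_inner_image_closure {K : Set E} (x : E) (hb : BddAbove ((fun t => ⟪t, x⟫) '' K)) :
    BddAbove ((fun t => ⟪t, x⟫) '' closure K) := by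
  obtain ⟨C, hC⟩ := hb
  refine ⟨C, ?_⟩
  rintro _ ⟨t, ht, rfl⟩
  have h1 : (fun t : E => ⟪t, x⟫) t ∈ closure ((fun t : E => ⟪t, x⟫) '' K) :=
    image_closure_subset_closure_image (cont_inner x) ⟨t, ht, rfl⟩
  exact closure_minimal hC isClosed_Iic h1

lemma sSup_image_closure {K : Set E} (x : E) (hne : K.Nonempty)
    (hb : BddAbove ((fun t => ⟪t, x⟫) '' K)) :
    sSup ((fun t => ⟪t, x⟫) '' closure K) = sSup ((fun t => ⟪t, x⟫) '' K) := by
  refine le_antisymm ?_ (csSup_le_csSup (bddAbove_inner_image_closure x hb) (hne.image _)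
    (Set.image_mono subset_closure))
  refine csSup_le ((hne.mono subset_closure).image _) ?_
  rintro _ ⟨t, ht, rfl⟩
  have h1 : (fun t : E => ⟪t, x⟫) t ∈ closure ((fun t : E => ⟪t, x⟫) '' K) :=
    image_closure_subset_closure_image (cont_inner x) ⟨t, ht, rfl⟩
  exact closure_minimal (fun y hy => le_csSup hb hy : _ ⊆ Set.Iic _) isClosed_Iic h1

/-- Strict separation of a point from a closed convex set, by a unit vector. -/
lemma exists_unit_sep {K : Set E} (hKconv : Convex ℝ K) (hKcl : IsClosed K)
    (hne : K.Nonempty) {t : E} (ht : t ∉ K) :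
    ∃ x : E, ‖x‖ = 1 ∧ ∀ s ∈ K, ⟪s, x⟫ < ⟪t, x⟫ := by
  obtain ⟨f, u, hfK, hft⟩ := geometric_hahn_banach_closed_point hKconv hKcl ht
  set y : E := (InnerProductSpace.toDual ℝ (EuclideanSpace ℝ (Fin n))).symm f with hy
  have hyapp : ∀ z : E, ⟪z, y⟫ = f z := by
    intro z
    rw [real_inner_comm]
    exact InnerProductSpace.toDual_symm_apply
  have hy0 : y ≠ 0 := by
    intro h0
    obtain ⟨a, ha⟩ := hne
    have h1 : f a < u := hfK a ha
    have h2 : f a = 0 := by rw [← hyapp a, h0, inner_zero_right]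
    have h3 : f t = 0 := by rw [← hyapp t, h0, inner_zero_right]
    linarith [hft]
  refine ⟨‖y‖⁻¹ • y, ?_, ?_⟩
  · rw [norm_smul, norm_inv, norm_norm, inv_mul_cancel₀ (norm_ne_zero_iff.2 hy0)]
  · intro s hs
    have hpos : (0:ℝ) < ‖y‖⁻¹ := inv_pos.2 (norm_pos_iff.2 hy0)
    rw [real_inner_smul_right, real_inner_smul_right]
    exact mul_lt_mul_of_pos_left (by rw [hyapp s, hyapp t]; linarith [hfK s hs, hft]) hpos

/-- From a sublinear function, get a dominated linear functional achieving its value at x. -/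
lemma exists_inner_le_sublinear (g : E → ℝ)
    (hhom : ∀ lam : ℝ, 0 ≤ lam → ∀ x, g (lam • x) = lam * g x)
    (hadd : ∀ x y, g (x + y) ≤ g x + g y) (x : E) :
    ∃ t : E, (∀ y, ⟪t, y⟫ ≤ g y) ∧ ⟪t, x⟫ = g x := by
  have hg0 : g 0 = 0 := by
    have := hhom 0 le_rfl 0
    simpa using this
  have key : ∀ (f : (EuclideanSpace ℝ (Fin n)) →ₗ.[ℝ] ℝ), (∀ z : f.domain, f z ≤ g z) →
      ∃ G : (EuclideanSpace ℝ (Fin n)) →ₗ[ℝ] ℝ, (∀ z : f.domain, G z = f z) ∧ ∀ z, G z ≤ g z := by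
    intro f hf
    exact exists_extension_of_le_sublinear f g (fun c hc z => hhom c hc.le z) hadd hf
  by_cases hx : x = 0
  · obtain ⟨G, -, hG⟩ := key ⟨⊥, 0⟩ (by
      rintro ⟨z, hz⟩
      have : z = 0 := by simpa using hz
      simp [this, hg0])
    refine ⟨(InnerProductSpace.toDual ℝ (EuclideanSpace ℝ (Fin n))).symm
      (LinearMap.toContinuousLinearMap G), fun y => ?_, ?_⟩
    · rw [show ((⟪_, y⟫:ℝ)) = _ from InnerProductSpace.toDual_symm_apply]
      exact hG y
    · rw [hx, inner_zero_right, hg0]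
  · set f := LinearPMap.mkSpanSingleton' (σ := RingHom.id ℝ) x (g x)
      (fun (c : ℝ) (hc : c • x = 0) => by
        rcases smul_eq_zero.1 hc with h | h
        · simp [h]
        · exact absurd h hx) with hf
    have hfdom : f.domain = Submodule.span ℝ {x} := by
      simpa [hf] using LinearPMap.domain_mkSpanSingleton x (g x) _
    have hfle : ∀ z : f.domain, f z ≤ g z := by
      rintro ⟨z, hz⟩
      rw [hfdom, Submodule.mem_span_singleton] at hz
      obtain ⟨c, rfl⟩ := hz
      have happ : f ⟨c • x, by rw [hfdom]; exact Submodule.smul_mem _ c (Submodule.mem_span_singleton_self x)⟩ = c • g x := by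
        exact LinearPMap.mkSpanSingleton'_apply x (g x) _ c _
      rw [happ]
      rcases le_or_gt 0 c with hc | hc
      · rw [hhom c hc x]; simp [smul_eq_mul]
      · have h1 : g (c • x) = (-c) * g (-x) := by
          have : c • x = (-c) • (-x) := by simp
          rw [this, hhom (-c) (by linarith) (-x)]
        have h2 : 0 ≤ g x + g (-x) := by
          have := hadd x (-x)
          simpa [hg0] using this
        rw [h1]
        simp only [smul_eq_mul]
        nlinarith
    obtain ⟨G, hGf, hG⟩ := key f hfle
    refine ⟨(InnerProductSpace.toDual ℝ (EuclideanSpace ℝ (Fin n))).symm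
      (LinearMap.toContinuousLinearMap G), fun y => ?_, ?_⟩
    · rw [show ((⟪_, y⟫:ℝ)) = _ from InnerProductSpace.toDual_symm_apply]
      exact hG y
    · rw [show ((⟪_, x⟫:ℝ)) = _ from InnerProductSpace.toDual_symm_apply]
      have hxmem : x ∈ f.domain := by
        rw [hfdom]; exact Submodule.mem_span_singleton_self x
      have h1 : G x = f ⟨x, hxmem⟩ := hGf ⟨x, hxmem⟩
      have h2 : f ⟨x, hxmem⟩ = g x := by
        have := LinearPMap.mkSpanSingleton'_apply_self (σ := RingHom.id ℝ) x (g x)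
          (fun (c : ℝ) (hc : c • x = 0) => by
            rcases smul_eq_zero.1 hc with h | h
            · simp [h]
            · exact absurd h hx) hxmem
        exact this
      exact h1.trans h2

variable {u : EuclideanSpace ℝ (Fin n) → ℝ}

lemma levelSet_subset (hu : IsFuzzyVector u) {α β : ℝ} (h0 : 0 ≤ α) (hαβ : α ≤ β) :
    levelSet u β ⊆ levelSet u α := by
  rcases eq_or_lt_of_le h0 with h0' | h0'
  · subst h0'
    by_cases hβ : β = 0
    · subst hβ; exact le_rfl
    · simp only [levelSet, if_neg hβ, if_pos rfl]
      exact fun t ht => subset_closure (lt_of_lt_of_le (lt_of_le_of_ne hαβ (Ne.symm hβ)) ht)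
  · have hβ0 : β ≠ 0 := by linarith
    have hα0 : α ≠ 0 := by linarith
    simp only [levelSet, if_neg hβ0, if_neg hα0]
    exact fun t ht => le_trans hαβ ht

lemma levelSet_closed (hu : IsFuzzyVector u) (α : ℝ) : IsClosed (levelSet u α) := by
  by_cases hα : α = 0
  · simp only [levelSet, if_pos hα]; exact isClosed_closure
  · simp only [levelSet, if_neg hα]; exact hu.2.2.2.2 α

lemma levelSet_compact (hu : IsFuzzyVector u) {α : ℝ} (h0 : 0 ≤ α) :
    IsCompact (levelSet u α) := by
  rcases eq_or_lt_of_le h0 with h0' | h0'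
  · rw [← h0']; simpa only [levelSet, if_pos rfl, ↓reduceIte] using hu.2.2.1
  · have hc : IsCompact (levelSet u 0) := by
      simpa only [levelSet, if_pos rfl, ↓reduceIte] using hu.2.2.1
    exact hc.of_isClosed_subset (levelSet_closed hu α) (levelSet_subset hu le_rfl h0'.le)

lemma levelSet_nonempty (hu : IsFuzzyVector u) {α : ℝ} (hα : α ≤ 1) :
    (levelSet u α).Nonempty := by
  obtain ⟨t₁, ht₁⟩ := hu.2.1
  by_cases h0 : α = 0
  · exact ⟨t₁, by simp only [levelSet, if_pos h0]; exact subset_closure (by simp [ht₁])⟩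
  · exact ⟨t₁, by simp only [levelSet, if_neg h0]; exact le_trans hα (le_of_eq ht₁.symm)⟩

lemma levelSet_convex (hu : IsFuzzyVector u) (α : ℝ) : Convex ℝ (levelSet u α) := by
  have hconv : ∀ β : ℝ, Convex ℝ {t : E | β ≤ u t} := by
    intro β s hs t ht a b ha hb hab
    have h1 : min (u s) (u t) ≤ u (a • s + (1 - a) • t) :=
      hu.2.2.2.1 s t a ⟨ha, by linarith⟩
    have hba : b = 1 - a := by linarith
    subst hba
    exact le_trans (le_min hs ht) h1
  by_cases hα : α = 0
  · simp only [levelSet, if_pos hα]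
    have : Convex ℝ {t : E | 0 < u t} := by
      intro s hs t ht a b ha hb hab
      have h1 : min (u s) (u t) ≤ u (a • s + (1 - a) • t) :=
        hu.2.2.2.1 s t a ⟨ha, by linarith⟩
      have hba : b = 1 - a := by linarith
      subst hba
      exact lt_of_lt_of_le (lt_min hs ht) h1
    exact this.closure
  · simp only [levelSet, if_neg hα]; exact hconv α

lemma le_fuzzySupp (hu : IsFuzzyVector u) {α : ℝ} (h0 : 0 ≤ α) {t : E}
    (ht : t ∈ levelSet u α) (x : E) : ⟪t, x⟫ ≤ fuzzySupp u α x :=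
  le_csSup (bddAbove_inner_image (levelSet_compact hu h0) x) ⟨t, ht, rfl⟩

lemma fuzzySupp_le (hu : IsFuzzyVector u) {α : ℝ} (hα : α ≤ 1) {x : E} {c : ℝ}
    (hc : ∀ t ∈ levelSet u α, ⟪t, x⟫ ≤ c) : fuzzySupp u α x ≤ c :=
  csSup_le ((levelSet_nonempty hu hα).image _) (by rintro _ ⟨t, ht, rfl⟩; exact hc t ht)

lemma fuzzySupp_antitone (hu : IsFuzzyVector u) {α β : ℝ} (h0 : 0 ≤ α) (hαβ : α ≤ β)
    (hβ : β ≤ 1) (x : E) : fuzzySupp u β x ≤ fuzzySupp u α x :=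
  csSup_le_csSup (bddAbove_inner_image (levelSet_compact hu h0) x)
    ((levelSet_nonempty hu hβ).image _)
    (Set.image_mono (levelSet_subset hu h0 hαβ))

lemma fuzzySupp_left_cont (hu : IsFuzzyVector u) (x : E) {α₀ : ℝ}
    (hα₀ : α₀ ∈ Set.Ioc (0:ℝ) 1) :
    Filter.Tendsto (fun α => fuzzySupp u α x) (nhdsWithin α₀ (Set.Iio α₀))
      (nhds (fuzzySupp u α₀ x)) := by
  obtain ⟨hα₀0, hα₀1⟩ := hα₀
  have key : ∀ ε > (0:ℝ), ∃ β ∈ Set.Ioo (0:ℝ) α₀, fuzzySupp u β x < fuzzySupp u α₀ x + ε := by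
    intro ε hε
    by_contra hcon
    push_neg at hcon
    set βs : ℕ → ℝ := fun k => α₀ - α₀ / (k + 2) with hβs
    have hβmem : ∀ k, βs k ∈ Set.Ioo (0:ℝ) α₀ := by
      intro k
      constructor
      · have h1 : α₀ / (k + 2) < α₀ := by
          rw [div_lt_iff₀ (by positivity)]
          nlinarith [Nat.cast_nonneg (α := ℝ) k]
        simpa [hβs] using sub_pos.2 h1
      · have h2 : (0:ℝ) < α₀ / (k + 2) := by positivity
        simp [hβs]; linarith
    have hβtend : Filter.Tendsto βs Filter.atTop (nhds α₀) := by
      have h1 : Filter.Tendsto (fun k : ℕ => α₀ / (k + 2)) Filter.atTop (nhds 0) := by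
        apply Filter.Tendsto.div_atTop (tendsto_const_nhds)
        exact Filter.tendsto_atTop_add_const_right _ 2 tendsto_natCast_atTop_atTop
      have h2 := Filter.Tendsto.sub
        (tendsto_const_nhds : Filter.Tendsto (fun _ : ℕ => α₀) Filter.atTop (nhds α₀)) h1
      simpa [hβs] using h2
    have hβ0le : ∀ k, βs 0 ≤ βs k := by
      intro k
      have h1 : α₀ / ((k:ℝ) + 2) ≤ α₀ / ((0:ℕ) + 2) := by
        apply div_le_div_of_nonneg_left hα₀0.le (by norm_num)
        have : (0:ℝ) ≤ (k:ℝ) := Nat.cast_nonneg k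
        push_cast
        linarith
      simp only [hβs]
      push_cast at h1 ⊢
      linarith
    have hpick : ∀ k : ℕ, ∃ t, t ∈ levelSet u (βs k) ∧ ⟪t, x⟫ = fuzzySupp u (βs k) x := by
      intro k
      obtain ⟨t, ht, hteq, -⟩ := exists_inner_eq_sSup (levelSet_compact hu (hβmem k).1.le)
        (levelSet_nonempty hu (le_trans (hβmem k).2.le hα₀1)) x
      exact ⟨t, ht, hteq⟩
    choose ts hts htval using hpick
    have htsmem : ∀ k, ts k ∈ levelSet u (βs 0) := fun k =>
      levelSet_subset hu (hβmem 0).1.le (hβ0le k) (hts k)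
    obtain ⟨t, htmem, φ, hφ, htend⟩ :=
      (levelSet_compact hu (hβmem 0).1.le).tendsto_subseq htsmem
    have hmemt : ∀ β, 0 < β → β < α₀ → β ≤ u t := by
      intro β hβ0 hβα₀
      have hev : ∀ᶠ k in Filter.atTop, ts (φ k) ∈ {s : E | β ≤ u s} := by
        have h1 : Filter.Tendsto (fun k => βs (φ k)) Filter.atTop (nhds α₀) :=
          hβtend.comp hφ.tendsto_atTop
        have h2 : ∀ᶠ k in Filter.atTop, β < βs (φ k) :=
          h1.eventually (eventually_gt_nhds hβα₀)
        filter_upwards [h2] with k hk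
        have h3 : ts (φ k) ∈ {s : E | βs (φ k) ≤ u s} := by
          have := hts (φ k)
          simpa [levelSet, if_neg (ne_of_gt (hβmem (φ k)).1)] using this
        exact le_trans hk.le h3
      exact (hu.2.2.2.2 β).mem_of_tendsto htend hev
    have hall : ∀ β, β < α₀ → β ≤ u t := by
      intro β hβ
      rcases le_or_gt β 0 with hβ0 | hβ0
      · exact le_trans hβ0 (hu.1 t).1
      · exact hmemt β hβ0 hβ
    have htα₀ : t ∈ levelSet u α₀ := by
      simp only [levelSet, if_neg (ne_of_gt hα₀0), Set.mem_setOf_eq]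
      refine le_of_forall_lt fun c hc => ?_
      have hmid : c < (c + α₀) / 2 := by linarith
      exact lt_of_lt_of_le hmid (hall _ (by linarith))
    have hle : ⟪t, x⟫ ≤ fuzzySupp u α₀ x := le_fuzzySupp hu hα₀0.le htα₀ x
    have hge : fuzzySupp u α₀ x + ε ≤ ⟪t, x⟫ := by
      have h1 : Filter.Tendsto (fun k => ⟪ts (φ k), x⟫) Filter.atTop (nhds ⟪t, x⟫) :=
        ((cont_inner x).tendsto t).comp htend
      refine ge_of_tendsto h1 ?_
      filter_upwards with k
      rw [htval (φ k)]
      exact hcon (βs (φ k)) (hβmem (φ k))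
    linarith
  rw [Metric.tendsto_nhdsWithin_nhds]
  intro ε hε
  obtain ⟨β, hβmem, hβlt⟩ := key ε hε
  refine ⟨α₀ - β, by simp [hβmem.2], fun {γ} hγ hd => ?_⟩
  rw [Real.dist_eq] at hd ⊢
  have hγα₀ : γ < α₀ := hγ
  have hγβ : β < γ := by
    rcases abs_lt.1 hd with ⟨h1, h2⟩; linarith
  have hγ0 : 0 < γ := lt_trans hβmem.1 hγβ
  have h1 : fuzzySupp u α₀ x ≤ fuzzySupp u γ x := fuzzySupp_antitone hu hγ0.le hγα₀.le hα₀1 x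
  have h2 : fuzzySupp u γ x ≤ fuzzySupp u β x :=
    fuzzySupp_antitone hu hβmem.1.le hγβ.le (le_trans hγα₀.le hα₀1) x
  rw [abs_lt]
  constructor <;> linarith

lemma fuzzySupp_right_cont (hu : IsFuzzyVector u) (x : E) :
    Filter.Tendsto (fun α => fuzzySupp u α x) (nhdsWithin 0 (Set.Ioi 0))
      (nhds (fuzzySupp u 0 x)) := by
  obtain ⟨t₁, ht₁⟩ := hu.2.1
  have hposne : {s : E | 0 < u s}.Nonempty := ⟨t₁, by simp [ht₁]⟩
  have hbdd : BddAbove ((fun t => ⟪t, x⟫) '' {s : E | 0 < u s}) := by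
    obtain ⟨C, hC⟩ := bddAbove_inner_image (levelSet_compact hu le_rfl) x
    refine ⟨C, ?_⟩
    rintro _ ⟨s, hs, rfl⟩
    exact hC ⟨s, by simp only [levelSet, if_pos rfl]; exact subset_closure hs, rfl⟩
  have hf0 : fuzzySupp u 0 x = sSup ((fun t => ⟪t, x⟫) '' {s : E | 0 < u s}) := by
    simp only [fuzzySupp, levelSet, if_pos rfl]
    exact sSup_image_closure x hposne hbdd
  have key : ∀ ε > (0:ℝ), ∃ α ∈ Set.Ioc (0:ℝ) 1, fuzzySupp u 0 x - ε < fuzzySupp u α x := by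
    intro ε hε
    have h1 : fuzzySupp u 0 x - ε < sSup ((fun t => ⟪t, x⟫) '' {s : E | 0 < u s}) := by
      rw [← hf0]; linarith
    obtain ⟨_, ⟨s, hs, rfl⟩, hgt⟩ := exists_lt_of_lt_csSup (hposne.image _) h1
    refine ⟨min (u s) 1, ⟨lt_min hs one_pos, min_le_right _ _⟩, ?_⟩
    · have hsmem : s ∈ levelSet u (min (u s) 1) := by
        have hne0 : min (u s) 1 ≠ 0 := ne_of_gt (lt_min hs one_pos)
        simp only [levelSet, if_neg hne0, Set.mem_setOf_eq]
        exact min_le_left _ _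
      exact lt_of_lt_of_le hgt (le_fuzzySupp hu (le_min hs.le zero_le_one) hsmem x)
  rw [Metric.tendsto_nhdsWithin_nhds]
  intro ε hε
  obtain ⟨α, hαmem, hαlt⟩ := key ε hε
  refine ⟨α, hαmem.1, fun {γ} hγ hd => ?_⟩
  rw [Real.dist_eq] at hd ⊢
  have hγ0 : (0:ℝ) < γ := hγ
  have hγα : γ < α := by
    have h0 : |γ| < α := by simpa using hd
    exact lt_of_le_of_lt (le_abs_self γ) h0
  have h1 : fuzzySupp u α x ≤ fuzzySupp u γ x :=
    fuzzySupp_antitone hu hγ0.le hγα.le hαmem.2 x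
  have h2 : fuzzySupp u γ x ≤ fuzzySupp u 0 x :=
    fuzzySupp_antitone hu le_rfl hγ0.le (lt_of_lt_of_le hγα hαmem.2).le x
  rw [abs_lt]
  constructor <;> linarith

lemma mem_levelSet_iff_inner (hu : IsFuzzyVector u) {α : ℝ} (hα : α ∈ Set.Icc (0:ℝ) 1)
    (t : E) : t ∈ levelSet u α ↔ ∀ x : E, ‖x‖ = 1 → ⟪t, x⟫ ≤ fuzzySupp u α x := by
  constructor
  · exact fun ht x _ => le_fuzzySupp hu hα.1 ht x
  · intro hx
    by_contra ht
    obtain ⟨x, hx1, hsep⟩ := exists_unit_sep (levelSet_convex hu α)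
      (levelSet_closed hu α) (levelSet_nonempty hu hα.2) ht
    obtain ⟨t₀, ht₀, ht₀eq, -⟩ := exists_inner_eq_sSup (levelSet_compact hu hα.1)
      (levelSet_nonempty hu hα.2) x
    have h1 : fuzzySupp u α x < ⟪t, x⟫ := by
      rw [fuzzySupp, ← ht₀eq]
      exact hsep t₀ ht₀
    exact absurd (hx x hx1) (not_le.2 h1)

lemma fuzzy_recovery (hu : IsFuzzyVector u) (t : E) :
    u t = sSup {α : ℝ | α ∈ Set.Icc (0:ℝ) 1 ∧ t ∈ levelSet u α} := by
  obtain ⟨h0t, h1t⟩ := hu.1 t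
  rcases eq_or_lt_of_le h0t with h0 | h0
  · have hsub : {α : ℝ | α ∈ Set.Icc (0:ℝ) 1 ∧ t ∈ levelSet u α} ⊆ {0} := by
      rintro α ⟨⟨hα0, hα1⟩, hmem⟩
      rcases eq_or_lt_of_le hα0 with h | h
      · simp [← h]
      · exfalso
        have : α ≤ u t := by
          simpa [levelSet, if_neg (ne_of_gt h)] using hmem
        rw [← h0] at this; linarith
    rcases Set.subset_singleton_iff_eq.1 hsub with he | he
    · rw [he, Real.sSup_empty, ← h0]
    · rw [he, csSup_singleton, ← h0]
  · have hset : {α : ℝ | α ∈ Set.Icc (0:ℝ) 1 ∧ t ∈ levelSet u α} = Set.Icc 0 (u t) := by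
      ext α
      simp only [Set.mem_setOf_eq, Set.mem_Icc]
      constructor
      · rintro ⟨⟨hα0, hα1⟩, hmem⟩
        refine ⟨hα0, ?_⟩
        rcases eq_or_lt_of_le hα0 with h | h
        · rw [← h]; exact h0t
        · simpa [levelSet, if_neg (ne_of_gt h)] using hmem
      · rintro ⟨hα0, hαu⟩
        refine ⟨⟨hα0, le_trans hαu h1t⟩, ?_⟩
        rcases eq_or_lt_of_le hα0 with h | h
        · rw [← h]
          simp only [levelSet, if_pos rfl]
          exact subset_closure h0
        · simpa [levelSet, if_neg (ne_of_gt h)] using hαu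
    rw [hset, csSup_Icc h0t]

lemma fuzzySupp_hom (hu : IsFuzzyVector u) {α : ℝ} (hα : α ∈ Set.Icc (0:ℝ) 1)
    (lam : ℝ) (hlam : 0 ≤ lam) (x : E) :
    fuzzySupp u α (lam • x) = lam * fuzzySupp u α x := by
  obtain ⟨t₀, ht₀, ht₀eq, ht₀max⟩ := exists_inner_eq_sSup (levelSet_compact hu hα.1)
    (levelSet_nonempty hu hα.2) x
  obtain ⟨t₁, ht₁, ht₁eq, ht₁max⟩ := exists_inner_eq_sSup (levelSet_compact hu hα.1)
    (levelSet_nonempty hu hα.2) (lam • x)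
  rw [fuzzySupp, ← ht₁eq, fuzzySupp, ← ht₀eq]
  apply le_antisymm
  · rw [real_inner_smul_right]
    exact mul_le_mul_of_nonneg_left (ht₀max t₁ ht₁) hlam
  · calc lam * ⟪t₀, x⟫ = ⟪t₀, lam • x⟫ := (real_inner_smul_right t₀ x lam).symm
      _ ≤ ⟪t₁, lam • x⟫ := ht₁max t₀ ht₀

lemma fuzzySupp_subadd (hu : IsFuzzyVector u) {α : ℝ} (hα : α ∈ Set.Icc (0:ℝ) 1)
    (x y : E) : fuzzySupp u α (x + y) ≤ fuzzySupp u α x + fuzzySupp u α y := by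
  obtain ⟨t₂, ht₂, ht₂eq, -⟩ := exists_inner_eq_sSup (levelSet_compact hu hα.1)
    (levelSet_nonempty hu hα.2) (x + y)
  rw [fuzzySupp, ← ht₂eq, inner_add_right]
  exact add_le_add (le_fuzzySupp hu hα.1 ht₂ x) (le_fuzzySupp hu hα.1 ht₂ y)

end FuzzyAux
namespace FuzzyAux

lemma recovery_from_supp {h : ℝ → EuclideanSpace ℝ (Fin n) → ℝ} (hu : IsFuzzyVector u)
    (hsupp : ∀ α ∈ Set.Icc (0:ℝ) 1, ∀ x : EuclideanSpace ℝ (Fin n), ‖x‖ = 1 →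
      fuzzySupp u α x = h α x) (t : E) :
    u t = sSup {α : ℝ | α ∈ Set.Icc (0:ℝ) 1 ∧
      ∀ x : EuclideanSpace ℝ (Fin n), ‖x‖ = 1 → ⟪t, x⟫ ≤ h α x} := by
  rw [fuzzy_recovery hu t]
  congr 1
  ext α
  simp only [Set.mem_setOf_eq]
  constructor
  · rintro ⟨hα, hmem⟩
    exact ⟨hα, fun x hx => by rw [← hsupp α hα x hx]; exact le_fuzzySupp hu hα.1 hmem x⟩
  · rintro ⟨hα, hmem⟩
    exact ⟨hα, (mem_levelSet_iff_inner hu hα t).2 fun x hx => by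
      rw [hsupp α hα x hx]; exact hmem x hx⟩

end FuzzyAux

open FuzzyAux in
theorem stmt12 {n : ℕ} (h : ℝ → EuclideanSpace ℝ (Fin n) → ℝ) :
    (((∀ α ∈ Set.Icc (0:ℝ) 1, ∃ g : EuclideanSpace ℝ (Fin n) → ℝ,
        (∀ lam : ℝ, 0 ≤ lam → ∀ x, g (lam • x) = lam * g x) ∧
        (∀ x y, g (x + y) ≤ g x + g y) ∧
        (∀ x, ‖x‖ = 1 → g x = h α x)) ∧
      (∀ x : EuclideanSpace ℝ (Fin n), ‖x‖ = 1 →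
        (∀ α β : ℝ, α ∈ Set.Icc (0:ℝ) 1 → β ∈ Set.Icc (0:ℝ) 1 → α ≤ β →
            h β x ≤ h α x) ∧
        (∀ α₀ ∈ Set.Ioc (0:ℝ) 1,
            Filter.Tendsto (fun α => h α x) (nhdsWithin α₀ (Set.Iio α₀))
              (nhds (h α₀ x))) ∧
        Filter.Tendsto (fun α => h α x) (nhdsWithin 0 (Set.Ioi 0)) (nhds (h 0 x)))) ↔
      (∃! u : EuclideanSpace ℝ (Fin n) → ℝ, IsFuzzyVector u ∧
        ∀ α ∈ Set.Icc (0:ℝ) 1, ∀ x : EuclideanSpace ℝ (Fin n), ‖x‖ = 1 →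
          fuzzySupp u α x = h α x)) ∧
    (∀ u : EuclideanSpace ℝ (Fin n) → ℝ, IsFuzzyVector u →
      (∀ α ∈ Set.Icc (0:ℝ) 1, ∀ x : EuclideanSpace ℝ (Fin n), ‖x‖ = 1 →
          fuzzySupp u α x = h α x) →
      ∀ t, u t = sSup {α : ℝ | α ∈ Set.Icc (0:ℝ) 1 ∧
        ∀ x : EuclideanSpace ℝ (Fin n), ‖x‖ = 1 → ⟪t, x⟫ ≤ h α x}) := by
  constructor
  · constructor
    · -- forward: VS1 ∧ VS2 → existence and uniqueness
      rintro ⟨hVS1, hVS2⟩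
      classical
      choose g hg using hVS1
      set K : ℝ → Set (EuclideanSpace ℝ (Fin n)) :=
        fun α => {t | ∀ x : EuclideanSpace ℝ (Fin n), ‖x‖ = 1 → ⟪t, x⟫ ≤ h α x} with hKdef
      -- K α coincides with the domination set of the sublinear extension
      have hKg : ∀ α (hα : α ∈ Set.Icc (0:ℝ) 1),
          K α = {t : EuclideanSpace ℝ (Fin n) | ∀ y, ⟪t, y⟫ ≤ g α hα y} := by
        intro α hα
        obtain ⟨hhom, hadd, hsph⟩ := hg α hα
        have hg0 : g α hα 0 = 0 := by simpa using hhom 0 le_rfl 0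
        ext t
        simp only [hKdef, Set.mem_setOf_eq]
        constructor
        · intro ht y
          by_cases hy : y = 0
          · simp [hy, hg0]
          · have hxu : ‖(‖y‖⁻¹ • y : EuclideanSpace ℝ (Fin n))‖ = 1 := by
              rw [norm_smul, norm_inv, norm_norm, inv_mul_cancel₀ (norm_ne_zero_iff.2 hy)]
            have h1 : ⟪t, ‖y‖⁻¹ • y⟫ ≤ g α hα (‖y‖⁻¹ • y) := by
              rw [hsph _ hxu]; exact ht _ hxu
            have h2 : g α hα y = ‖y‖ * g α hα (‖y‖⁻¹ • y) := by
              rw [← hhom ‖y‖ (norm_nonneg y) _, smul_smul,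
                mul_inv_cancel₀ (norm_ne_zero_iff.2 hy), one_smul]
            have h3 : ‖y‖ * ⟪t, ‖y‖⁻¹ • y⟫ = ⟪t, y⟫ := by
              rw [real_inner_smul_right, ← mul_assoc,
                mul_inv_cancel₀ (norm_ne_zero_iff.2 hy), one_mul]
            rw [← h3, h2]
            exact mul_le_mul_of_nonneg_left h1 (norm_nonneg y)
        · intro ht x hx
          rw [← (hg α hα).2.2 x hx]
          exact ht x
      have hKclosed : ∀ α, IsClosed (K α) := by
        intro α
        have heq : K α = ⋂ x : EuclideanSpace ℝ (Fin n), ⋂ _ : ‖x‖ = 1,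
            {t : EuclideanSpace ℝ (Fin n) | ⟪t, x⟫ ≤ h α x} := by
          ext t
          simp only [hKdef, Set.mem_setOf_eq, Set.mem_iInter]
        rw [heq]
        exact isClosed_iInter fun x => isClosed_iInter fun _ =>
          isClosed_le (cont_inner x) continuous_const
      have hKconv : ∀ α, Convex ℝ (K α) := by
        intro α t1 ht1 t2 ht2 a b ha hb hab
        intro x hx
        have e1 : ⟪a • t1 + b • t2, x⟫ = a * ⟪t1, x⟫ + b * ⟪t2, x⟫ := by
          rw [inner_add_left, real_inner_smul_left, real_inner_smul_left]
        rw [Set.mem_setOf_eq] at ht1 ht2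
        have i1 := mul_le_mul_of_nonneg_left (ht1 x hx) ha
        have i2 := mul_le_mul_of_nonneg_left (ht2 x hx) hb
        have e2 : a * h α x + b * h α x = h α x := by rw [← add_mul, hab, one_mul]
        rw [e1]
        linarith
      have hKne : ∀ α (hα : α ∈ Set.Icc (0:ℝ) 1), (K α).Nonempty := by
        intro α hα
        obtain ⟨hhom, hadd, hsph⟩ := hg α hα
        obtain ⟨t, htle, -⟩ := exists_inner_le_sublinear (g α hα) hhom hadd 0
        exact ⟨t, by rw [hKg α hα]; exact htle⟩
      have hKcompact : ∀ α (hα : α ∈ Set.Icc (0:ℝ) 1), IsCompact (K α) := by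
        intro α hα
        obtain ⟨hhom, hadd, hsph⟩ := hg α hα
        have hconv : ConvexOn ℝ Set.univ (g α hα) := by
          refine ⟨convex_univ, fun x _ y _ a b ha hb hab => ?_⟩
          calc g α hα (a • x + b • y) ≤ g α hα (a • x) + g α hα (b • y) := hadd _ _
            _ = a * g α hα x + b * g α hα y := by rw [hhom a ha, hhom b hb]
            _ = a • g α hα x + b • g α hα y := by simp [smul_eq_mul]
        have hcont : Continuous (g α hα) := by
          rw [← continuousOn_univ]
          exact hconv.continuousOn isOpen_univ
        obtain ⟨C, hC⟩ := (isCompact_sphere (0 : EuclideanSpace ℝ (Fin n)) 1).bddAbove_image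
          hcont.continuousOn
        have hsub : K α ⊆ Metric.closedBall 0 (max C 0) := by
          intro t ht
          rw [Metric.mem_closedBall, dist_zero_right]
          by_cases ht0 : t = 0
          · simp [ht0, le_max_right]
          · have htg : ∀ y, ⟪t, y⟫ ≤ g α hα y := by
              rw [hKg α hα] at ht; exact ht
            have h1 : ‖t‖ ^ 2 = ⟪t, t⟫ := (real_inner_self_eq_norm_sq t).symm
            have h2 : g α hα t = ‖t‖ * g α hα (‖t‖⁻¹ • t) := by
              rw [← hhom ‖t‖ (norm_nonneg t) _, smul_smul,
                mul_inv_cancel₀ (norm_ne_zero_iff.2 ht0), one_smul]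
            have hmem : (‖t‖⁻¹ • t : EuclideanSpace ℝ (Fin n)) ∈ Metric.sphere 0 1 := by
              rw [mem_sphere_zero_iff_norm, norm_smul, norm_inv, norm_norm,
                inv_mul_cancel₀ (norm_ne_zero_iff.2 ht0)]
            have h3 : g α hα (‖t‖⁻¹ • t) ≤ C := hC ⟨_, hmem, rfl⟩
            have h4 : ‖t‖ ^ 2 ≤ ‖t‖ * C := by
              rw [h1]
              calc ⟪t, t⟫ ≤ g α hα t := htg t
                _ = ‖t‖ * g α hα (‖t‖⁻¹ • t) := h2
                _ ≤ ‖t‖ * C := mul_le_mul_of_nonneg_left h3 (norm_nonneg t)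
            have h5 : 0 < ‖t‖ := norm_pos_iff.2 ht0
            have h6 : ‖t‖ ≤ C := by nlinarith
            exact le_trans h6 (le_max_left _ _)
        exact (isCompact_closedBall _ _).of_isClosed_subset (hKclosed α) hsub
      have hKmono : ∀ {β α' : ℝ}, β ∈ Set.Icc (0:ℝ) 1 → α' ∈ Set.Icc (0:ℝ) 1 → β ≤ α' →
          K α' ⊆ K β := by
        intro β α' hβ hα' hle t ht x hx
        exact le_trans (ht x hx) ((hVS2 x hx).1 β α' hβ hα' hle)
      have hKleft : ∀ α, α ∈ Set.Ioc (0:ℝ) 1 → ∀ t, (∀ β ∈ Set.Ioo (0:ℝ) α, t ∈ K β) →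
          t ∈ K α := by
        intro α hα t hβ x hx
        have htd := (hVS2 x hx).2.1 α hα
        refine ge_of_tendsto htd ?_
        filter_upwards [Ioo_mem_nhdsLT_of_mem (⟨hα.1, le_rfl⟩ : α ∈ Set.Ioc 0 α)] with β hmem
        exact hβ β hmem x hx
      -- the candidate fuzzy vector
      set u : EuclideanSpace ℝ (Fin n) → ℝ :=
        fun t => sSup {α : ℝ | α ∈ Set.Icc (0:ℝ) 1 ∧ t ∈ K α} with hu_def
      have hSbdd : ∀ t, BddAbove {α : ℝ | α ∈ Set.Icc (0:ℝ) 1 ∧ t ∈ K α} :=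
        fun t => ⟨1, fun α hα => hα.1.2⟩
      have hu0 : ∀ t, 0 ≤ u t := by
        intro t
        by_cases hS : {α : ℝ | α ∈ Set.Icc (0:ℝ) 1 ∧ t ∈ K α}.Nonempty
        · obtain ⟨a, ha⟩ := hS
          exact le_trans ha.1.1 (le_csSup (hSbdd t) ha)
        · rw [hu_def]
          simp only
          rw [Set.not_nonempty_iff_eq_empty.1 hS, Real.sSup_empty]
      have hu1 : ∀ t, u t ≤ 1 := by
        intro t
        by_cases hS : {α : ℝ | α ∈ Set.Icc (0:ℝ) 1 ∧ t ∈ K α}.Nonempty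
        · exact csSup_le hS fun α hα => hα.1.2
        · rw [hu_def]
          simp only
          rw [Set.not_nonempty_iff_eq_empty.1 hS, Real.sSup_empty]
          exact zero_le_one
      have hchar : ∀ α, α ∈ Set.Ioc (0:ℝ) 1 → ∀ t, (α ≤ u t ↔ t ∈ K α) := by
        intro α hα t
        constructor
        · intro hle
          refine hKleft α hα t ?_
          intro β hβ
          have hne : {γ : ℝ | γ ∈ Set.Icc (0:ℝ) 1 ∧ t ∈ K γ}.Nonempty := by
            by_contra hS
            rw [hu_def] at hle
            simp only at hle
            rw [Set.not_nonempty_iff_eq_empty.1 hS, Real.sSup_empty] at hle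
            linarith [hα.1]
          obtain ⟨γ, hγS, hγgt⟩ := exists_lt_of_lt_csSup hne (lt_of_lt_of_le hβ.2 hle)
          exact hKmono ⟨hβ.1.le, le_trans hβ.2.le hα.2⟩ hγS.1 hγgt.le hγS.2
        · intro ht
          exact le_csSup (hSbdd t) ⟨⟨hα.1.le, hα.2⟩, ht⟩
      have hlevel : ∀ α, α ∈ Set.Ioc (0:ℝ) 1 → {t : EuclideanSpace ℝ (Fin n) | α ≤ u t} = K α :=
        fun α hα => Set.ext fun t => hchar α hα t
      have hsub0 : {t : EuclideanSpace ℝ (Fin n) | 0 < u t} ⊆ K 0 := by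
        intro t ht
        have hne : {γ : ℝ | γ ∈ Set.Icc (0:ℝ) 1 ∧ t ∈ K γ}.Nonempty := by
          by_contra hS
          rw [Set.mem_setOf_eq, hu_def] at ht
          simp only at ht
          rw [Set.not_nonempty_iff_eq_empty.1 hS, Real.sSup_empty] at ht
          exact lt_irrefl 0 ht
        obtain ⟨γ, hγS, hγgt⟩ := exists_lt_of_lt_csSup hne ht
        exact hKmono ⟨le_rfl, zero_le_one⟩ hγS.1 hγgt.le hγS.2
      have hclosed_levels : ∀ α : ℝ, IsClosed {t : EuclideanSpace ℝ (Fin n) | α ≤ u t} := by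
        intro α
        rcases le_or_gt α 0 with hα | hα
        · have : {t : EuclideanSpace ℝ (Fin n) | α ≤ u t} = Set.univ :=
            Set.eq_univ_iff_forall.2 fun t => le_trans hα (hu0 t)
          rw [this]; exact isClosed_univ
        · rcases le_or_gt α 1 with hα1 | hα1
          · rw [hlevel α ⟨hα, hα1⟩]; exact hKclosed α
          · have : {t : EuclideanSpace ℝ (Fin n) | α ≤ u t} = ∅ := by
              ext t
              simp only [Set.mem_setOf_eq, Set.mem_empty_iff_false, iff_false, not_le]
              exact lt_of_le_of_lt (hu1 t) hα1
            rw [this]; exact isClosed_empty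
      have hfuzzy : IsFuzzyVector u := by
        refine ⟨fun t => ⟨hu0 t, hu1 t⟩, ?_, ?_, ?_, hclosed_levels⟩
        · -- regular
          obtain ⟨t₁, ht₁⟩ := hKne 1 ⟨zero_le_one, le_rfl⟩
          exact ⟨t₁, le_antisymm (hu1 t₁) ((hchar 1 ⟨one_pos, le_rfl⟩ t₁).2 ht₁)⟩
        · -- compact support
          refine ((hKcompact 0 ⟨le_rfl, zero_le_one⟩).of_isClosed_subset isClosed_closure
            (closure_minimal hsub0 (hKclosed 0)))
        · -- quasi-concavity
          intro s t lam hlam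
          set m := min (u s) (u t) with hm
          rcases le_or_gt m 0 with hm0 | hm0
          · exact le_trans hm0 (hu0 _)
          · refine le_of_forall_lt fun c hc => ?_
            set β := (max c 0 + m) / 2 with hβdef
            have hmax0 : 0 ≤ max c 0 := le_max_right c 0
            have hmaxlt : max c 0 < m := max_lt hc hm0
            have hβ0 : 0 < β := by rw [hβdef]; linarith
            have hβm : β < m := by rw [hβdef]; linarith
            have hcβ : c < β := lt_of_le_of_lt (le_max_left c 0) (by rw [hβdef]; linarith)
            have hβIoc : β ∈ Set.Ioc (0:ℝ) 1 :=
              ⟨hβ0, le_trans hβm.le (le_trans (min_le_left _ _) (hu1 s))⟩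
            have hsK : s ∈ K β := (hchar _ hβIoc s).1 (le_trans hβm.le (min_le_left _ _))
            have htK : t ∈ K β := (hchar _ hβIoc t).1 (le_trans hβm.le (min_le_right _ _))
            have hcomb : lam • s + (1 - lam) • t ∈ K β :=
              hKconv _ hsK htK hlam.1 (by linarith [hlam.2]) (by ring)
            have hfin := (hchar _ hβIoc _).2 hcomb
            linarith
      -- support function equals h
      have hsuppIoc : ∀ α, α ∈ Set.Ioc (0:ℝ) 1 → ∀ x : EuclideanSpace ℝ (Fin n), ‖x‖ = 1 →
          fuzzySupp u α x = h α x := by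
        intro α hα x hx
        have hαIcc : α ∈ Set.Icc (0:ℝ) 1 := ⟨hα.1.le, hα.2⟩
        have hlev : levelSet u α = K α := by
          simp only [levelSet, if_neg (ne_of_gt hα.1)]
          exact hlevel α hα
        rw [fuzzySupp, hlev]
        apply le_antisymm
        · refine csSup_le ((hKne α hαIcc).image _) ?_
          rintro _ ⟨t, ht, rfl⟩
          exact ht x hx
        · obtain ⟨hhom, hadd, hsph⟩ := hg α hαIcc
          obtain ⟨ts, htsle, htseq⟩ := exists_inner_le_sublinear (g α hαIcc) hhom hadd x
          have htsK : ts ∈ K α := by rw [hKg α hαIcc]; exact htsle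
          have he : h α x = ⟪ts, x⟫ := by rw [htseq, hsph x hx]
          rw [he]
          exact le_csSup (bddAbove_inner_image (hKcompact α hαIcc) x) ⟨ts, htsK, rfl⟩
      have hsupp : ∀ α ∈ Set.Icc (0:ℝ) 1, ∀ x : EuclideanSpace ℝ (Fin n), ‖x‖ = 1 →
          fuzzySupp u α x = h α x := by
        intro α hα x hx
        rcases eq_or_lt_of_le hα.1 with h0 | h0
        swap
        · exact hsuppIoc α ⟨h0, hα.2⟩ x hx
        subst h0
        obtain ⟨t₁, ht₁⟩ := hfuzzy.2.1
        have hposne : {s : EuclideanSpace ℝ (Fin n) | 0 < u s}.Nonempty :=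
          ⟨t₁, by simp [ht₁]⟩
        have hbdd : BddAbove ((fun t => ⟪t, x⟫) '' {s : EuclideanSpace ℝ (Fin n) | 0 < u s}) :=
          (bddAbove_inner_image (hKcompact 0 ⟨le_rfl, zero_le_one⟩) x).mono
            (Set.image_mono hsub0)
        have hlev0 : levelSet u 0 = closure {s : EuclideanSpace ℝ (Fin n) | 0 < u s} :=
          if_pos rfl
        rw [fuzzySupp, hlev0, sSup_image_closure x hposne hbdd]
        apply le_antisymm
        · refine csSup_le (hposne.image _) ?_
          rintro _ ⟨t, ht, rfl⟩
          have hne : {γ : ℝ | γ ∈ Set.Icc (0:ℝ) 1 ∧ t ∈ K γ}.Nonempty := by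
            by_contra hS
            rw [Set.mem_setOf_eq, hu_def] at ht
            simp only at ht
            rw [Set.not_nonempty_iff_eq_empty.1 hS, Real.sSup_empty] at ht
            exact lt_irrefl 0 ht
          obtain ⟨γ, hγS, hγgt⟩ := exists_lt_of_lt_csSup hne ht
          exact le_trans (hγS.2 x hx) ((hVS2 x hx).1 0 γ ⟨le_rfl, zero_le_one⟩ hγS.1 hγgt.le)
        · have htd := (hVS2 x hx).2.2
          refine le_of_tendsto htd ?_
          filter_upwards [Ioo_mem_nhdsGT_of_mem
            (⟨le_rfl, one_pos⟩ : (0:ℝ) ∈ Set.Ico (0:ℝ) 1)] with β hβ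
          have hβIoc : β ∈ Set.Ioc (0:ℝ) 1 := ⟨hβ.1, hβ.2.le⟩
          rw [← hsuppIoc β hβIoc x hx]
          have hlevβ : levelSet u β = K β := by
            simp only [levelSet, if_neg (ne_of_gt hβ.1)]
            exact hlevel β hβIoc
          rw [fuzzySupp, hlevβ]
          refine csSup_le_csSup hbdd ((hKne β ⟨hβ.1.le, hβ.2.le⟩).image _)
            (Set.image_mono ?_)
          intro t ht
          exact lt_of_lt_of_le hβ.1 ((hchar β hβIoc t).2 ht)
      refine ⟨u, ⟨hfuzzy, hsupp⟩, ?_⟩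
      rintro u' ⟨hu', hsupp'⟩
      funext t
      rw [recovery_from_supp hu' hsupp' t]
      rfl
    · -- backward: from unique fuzzy vector
      rintro ⟨u, ⟨hu, hsupp⟩, -⟩
      constructor
      · intro α hα
        exact ⟨fuzzySupp u α, fun lam hlam x => fuzzySupp_hom hu hα lam hlam x,
          fuzzySupp_subadd hu hα, fun x hx => hsupp α hα x hx⟩
      · intro x hx
        refine ⟨?_, ?_, ?_⟩
        · intro α β hα hβ hαβ
          rw [← hsupp α hα x hx, ← hsupp β hβ x hx]
          exact fuzzySupp_antitone hu hα.1 hαβ hβ.2 x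
        · intro α₀ hα₀
          have h1 := fuzzySupp_left_cont hu x hα₀
          rw [← hsupp α₀ ⟨hα₀.1.le, hα₀.2⟩ x hx]
          refine h1.congr' ?_
          filter_upwards [Ioo_mem_nhdsLT_of_mem
            (⟨hα₀.1, le_rfl⟩ : α₀ ∈ Set.Ioc (0:ℝ) α₀)] with β hβ
          exact hsupp β ⟨hβ.1.le, le_trans hβ.2.le hα₀.2⟩ x hx
        · have h1 := fuzzySupp_right_cont hu x
          rw [← hsupp 0 ⟨le_rfl, zero_le_one⟩ x hx]
          refine h1.congr' ?_
          filter_upwards [Ioo_mem_nhdsGT_of_mem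
            (⟨le_rfl, one_pos⟩ : (0:ℝ) ∈ Set.Ico (0:ℝ) 1)] with β hβ
          exact hsupp β ⟨hβ.1.le, hβ.2.le⟩ x hx
  · -- part 2
    intro u hu hsupp t
    exact recovery_from_supp hu hsupp t
end
end

section
/- For fuzzy vectors u, v, w on ℝⁿ, the following are equivalent: (i) u = v ⊕ w, where (v ⊕ w)(t) = sup_{r+s=t} min(v(r), w(s)); (ii) u_α = v_α + w_α (Minkowski sum of level sets) for all α ∈ [0,1]; (iii) h_u = h_v + h_w as functions on [0,1] × S^{n−1}. -/
open scoped RealInnerProductSpace Pointwise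

noncomputable section

section Aux

variable {n : ℕ}

local notation "E" => EuclideanSpace ℝ (Fin n)

/-- Superlevel sets at positive levels are compact. -/
theorem fv_superlevel_compact {u : E → ℝ} (hu : IsFuzzyVector u) {γ : ℝ} (hγ : 0 < γ) :
    IsCompact {t | γ ≤ u t} := by
  refine hu.2.2.1.of_isClosed_subset (hu.2.2.2.2 γ) ?_
  intro t ht
  exact subset_closure (lt_of_lt_of_le hγ ht)

theorem fv_levelSet_isCompact {u : E → ℝ} (hu : IsFuzzyVector u) {α : ℝ} (h0 : 0 ≤ α) :
    IsCompact (levelSet u α) := by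
  unfold levelSet
  split_ifs with h
  · exact hu.2.2.1
  · exact fv_superlevel_compact hu (lt_of_le_of_ne h0 (Ne.symm h))

theorem fv_levelSet_nonempty {u : E → ℝ} (hu : IsFuzzyVector u) {α : ℝ} (h1 : α ≤ 1) :
    (levelSet u α).Nonempty := by
  obtain ⟨t₀, ht₀⟩ := hu.2.1
  unfold levelSet
  split_ifs with h
  · exact ⟨t₀, subset_closure (by simp [ht₀])⟩
  · exact ⟨t₀, by simp only [Set.mem_setOf_eq, ht₀]; exact h1⟩

theorem fv_levelSet_convex {u : E → ℝ} (hu : IsFuzzyVector u) (α : ℝ) :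
    Convex ℝ (levelSet u α) := by
  have hq := hu.2.2.2.1
  have hconv : ∀ β : ℝ, Convex ℝ {t | β ≤ u t} := by
    intro β x hx y hy a b ha hb hab
    have h := hq x y a ⟨ha, by linarith⟩
    rw [show (1:ℝ) - a = b by linarith] at h
    exact le_trans (le_min hx hy) h
  unfold levelSet
  split_ifs with h
  · refine Convex.closure ?_
    intro x hx y hy a b ha hb hab
    have h := hq x y a ⟨ha, by linarith⟩
    rw [show (1:ℝ) - a = b by linarith] at h
    exact lt_of_lt_of_le (lt_min hx hy) h
  · exact hconv α

/-- The defining set of `fuzzyAdd v w t`. -/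
theorem fuzzyAdd_set_nonempty (v w : E → ℝ) (t : E) :
    {m : ℝ | ∃ r s, r + s = t ∧ m = min (v r) (w s)}.Nonempty :=
  ⟨min (v 0) (w t), 0, t, by simp, rfl⟩

theorem fuzzyAdd_set_bddAbove {v w : E → ℝ} (hv : IsFuzzyVector v) (_hw : IsFuzzyVector w)
    (t : E) : BddAbove {m : ℝ | ∃ r s, r + s = t ∧ m = min (v r) (w s)} := by
  refine ⟨1, ?_⟩
  rintro m ⟨r, s, _, rfl⟩
  exact le_trans (min_le_left _ _) (hv.1 r).2

theorem fuzzyAdd_mem_Icc {v w : E → ℝ} (hv : IsFuzzyVector v) (hw : IsFuzzyVector w)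
    (t : E) : fuzzyAdd v w t ∈ Set.Icc (0:ℝ) 1 := by
  constructor
  · refine le_trans (le_min (hv.1 0).1 (hw.1 t).1) ?_
    exact le_csSup (fuzzyAdd_set_bddAbove hv hw t) ⟨0, t, by simp, rfl⟩
  · refine csSup_le (fuzzyAdd_set_nonempty v w t) ?_
    rintro m ⟨r, s, _, rfl⟩
    exact le_trans (min_le_left _ _) (hv.1 r).2

/-- Positive level sets of the fuzzy sum are Minkowski sums of level sets. -/
theorem fuzzyAdd_level {v w : E → ℝ} (hv : IsFuzzyVector v) (hw : IsFuzzyVector w)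
    {α : ℝ} (hα0 : 0 < α) :
    {t | α ≤ fuzzyAdd v w t} = {t | α ≤ v t} + {t | α ≤ w t} := by
  ext t
  constructor
  · intro ht
    simp only [Set.mem_setOf_eq] at ht
    -- construct the decreasing sequence of compact sets
    set β : ℕ → ℝ := fun k => α - α / ((k : ℝ) + 2) with hβ
    have hβlt : ∀ k, β k < α := by
      intro k
      have : 0 < α / ((k : ℝ) + 2) := by positivity
      simp only [hβ]; linarith
    have hβpos : ∀ k, 0 < β k := by
      intro k
      have h2 : α / ((k : ℝ) + 2) ≤ α / 2 := by
        apply div_le_div_of_nonneg_left hα0.le (by norm_num)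
        have : (0:ℝ) ≤ (k:ℝ) := Nat.cast_nonneg k
        linarith
      have : 0 < α / 2 := by positivity
      simp only [hβ]; linarith
    have hβmono : ∀ k, β k ≤ β (k + 1) := by
      intro k
      have h2 : α / ((k : ℝ) + 1 + 2) ≤ α / ((k : ℝ) + 2) := by
        apply div_le_div_of_nonneg_left hα0.le (by positivity) (by linarith)
      simp only [hβ]
      push_cast
      linarith
    set C : ℕ → Set E := fun k => {r | β k ≤ v r} ∩ {r | β k ≤ w (t - r)} with hC
    have hCclosed : ∀ k, IsClosed (C k) := by
      intro k
      exact (hv.2.2.2.2 (β k)).inter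
        ((hw.2.2.2.2 (β k)).preimage (continuous_const.sub continuous_id))
    have hCne : ∀ k, (C k).Nonempty := by
      intro k
      obtain ⟨m, hm, hmgt⟩ := exists_lt_of_lt_csSup (fuzzyAdd_set_nonempty v w t)
        (lt_of_lt_of_le (hβlt k) ht)
      obtain ⟨r, s, hrs, rfl⟩ := hm
      refine ⟨r, le_of_lt (lt_of_lt_of_le hmgt (min_le_left _ _)), ?_⟩
      have hs : t - r = s := by rw [← hrs]; abel
      rw [Set.mem_setOf_eq, hs]
      exact le_of_lt (lt_of_lt_of_le hmgt (min_le_right _ _))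
    have hCsub : ∀ k, C (k + 1) ⊆ C k := by
      intro k r hr
      exact ⟨le_trans (hβmono k) hr.1, le_trans (hβmono k) hr.2⟩
    have hC0 : IsCompact (C 0) := by
      refine (fv_superlevel_compact hv (hβpos 0)).of_isClosed_subset (hCclosed 0) ?_
      exact Set.inter_subset_left
    obtain ⟨r, hr⟩ := IsCompact.nonempty_iInter_of_sequence_nonempty_isCompact_isClosed
      C hCsub hCne hC0 hCclosed
    simp only [Set.mem_iInter, hC, Set.mem_inter_iff, Set.mem_setOf_eq] at hr
    have hβtend : Filter.Tendsto β Filter.atTop (nhds α) := by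
      have h1 : Filter.Tendsto (fun k : ℕ => (k : ℝ) + 2) Filter.atTop Filter.atTop :=
        Filter.tendsto_atTop_add_const_right _ _ tendsto_natCast_atTop_atTop
      have h2 : Filter.Tendsto (fun k : ℕ => α / ((k : ℝ) + 2)) Filter.atTop (nhds 0) :=
        Filter.Tendsto.div_atTop tendsto_const_nhds h1
      have := Filter.Tendsto.sub (tendsto_const_nhds (x := α)) h2
      simpa using this
    have hvr : α ≤ v r := le_of_tendsto' hβtend fun k => (hr k).1
    have hwr : α ≤ w (t - r) := le_of_tendsto' hβtend fun k => (hr k).2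
    exact Set.mem_add.mpr ⟨r, hvr, t - r, hwr, by abel⟩
  · intro ht
    obtain ⟨r, hr, s, hs, rfl⟩ := Set.mem_add.mp ht
    simp only [Set.mem_setOf_eq]
    exact le_trans (le_min hr hs)
      (le_csSup (fuzzyAdd_set_bddAbove hv hw _) ⟨r, s, rfl, rfl⟩)

/-- The support of the fuzzy sum is the Minkowski sum of supports. -/
theorem fuzzyAdd_support {v w : E → ℝ} (hv : IsFuzzyVector v) (hw : IsFuzzyVector w) :
    {t | 0 < fuzzyAdd v w t} = {t | 0 < v t} + {t | 0 < w t} := by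
  ext t
  constructor
  · intro ht
    simp only [Set.mem_setOf_eq] at ht
    obtain ⟨m, hm, hmgt⟩ := exists_lt_of_lt_csSup (fuzzyAdd_set_nonempty v w t) ht
    obtain ⟨r, s, hrs, rfl⟩ := hm
    exact Set.mem_add.mpr ⟨r, lt_of_lt_of_le hmgt (min_le_left _ _), s,
      lt_of_lt_of_le hmgt (min_le_right _ _), hrs⟩
  · intro ht
    obtain ⟨r, hr, s, hs, rfl⟩ := Set.mem_add.mp ht
    simp only [Set.mem_setOf_eq]
    exact lt_of_lt_of_le (lt_min hr hs)
      (le_csSup (fuzzyAdd_set_bddAbove hv hw _) ⟨r, s, rfl, rfl⟩)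

theorem closure_add_of_compact {A B : Set E} (hA : IsCompact (closure A))
    (hB : IsCompact (closure B)) : closure (A + B) = closure A + closure B := by
  apply le_antisymm
  · exact closure_minimal (Set.add_subset_add subset_closure subset_closure)
      (hA.add hB).isClosed
  · rintro x hx
    obtain ⟨a, ha, b, hb, rfl⟩ := Set.mem_add.mp hx
    exact map_mem_closure₂ continuous_add ha hb fun p hp q hq => Set.add_mem_add hp hq

theorem sSup_inner_add {A B : Set E} (hA : IsCompact A) (hB : IsCompact B)
    (hAne : A.Nonempty) (hBne : B.Nonempty) (x : E) :
    sSup ((fun t => ⟪t, x⟫) '' (A + B)) =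
      sSup ((fun t => ⟪t, x⟫) '' A) + sSup ((fun t => ⟪t, x⟫) '' B) := by
  have hcont : Continuous (fun t : E => ⟪t, x⟫) := continuous_id.inner continuous_const
  have himg : (fun t : E => ⟪t, x⟫) '' (A + B) =
      ((fun t : E => ⟪t, x⟫) '' A) + ((fun t : E => ⟪t, x⟫) '' B) := by
    ext m
    constructor
    · rintro ⟨t, ht, rfl⟩
      obtain ⟨a, ha, b, hb, rfl⟩ := Set.mem_add.mp ht
      exact Set.mem_add.mpr ⟨⟪a, x⟫, Set.mem_image_of_mem _ ha, ⟪b, x⟫,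
        Set.mem_image_of_mem _ hb, (inner_add_left a b x).symm⟩
    · intro hm
      obtain ⟨p, ⟨a, ha, rfl⟩, q, ⟨b, hb, rfl⟩, rfl⟩ := Set.mem_add.mp hm
      exact ⟨a + b, Set.add_mem_add ha hb, inner_add_left a b x⟩
  rw [himg]
  exact csSup_add (hAne.image _) (hA.image hcont).bddAbove (hBne.image _)
    (hB.image hcont).bddAbove

theorem subset_of_sSup_inner_le {A B : Set E} (hBc : IsCompact B) (hBv : Convex ℝ B)
    (hAne : A.Nonempty) (hBne : B.Nonempty)
    (h : ∀ x : E, ‖x‖ = 1 → sSup ((fun t => ⟪t, x⟫) '' A) ≤ sSup ((fun t => ⟪t, x⟫) '' B))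
    (hAc : IsCompact A) : A ⊆ B := by
  intro a ha
  by_contra hna
  obtain ⟨f, c, hfb, hfa⟩ := geometric_hahn_banach_closed_point hBv hBc.isClosed hna
  set y : E := (InnerProductSpace.toDual ℝ _).symm f with hy
  have hyz : ∀ z : E, ⟪y, z⟫ = f z := fun z => InnerProductSpace.toDual_symm_apply
  have hyne : y ≠ 0 := by
    intro h0
    obtain ⟨b, hb⟩ := hBne
    have h1 : f b = 0 := by rw [← hyz b, h0, inner_zero_left]
    have h2 : f a = 0 := by rw [← hyz a, h0, inner_zero_left]
    have := hfb b hb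
    rw [h1] at this
    rw [h2] at hfa
    linarith
  have hypos : (0:ℝ) < ‖y‖ := norm_pos_iff.mpr hyne
  set x : E := ‖y‖⁻¹ • y with hx
  have hxnorm : ‖x‖ = 1 := by
    rw [hx, norm_smul, norm_inv, norm_norm]
    field_simp
  have hinner : ∀ z : E, ⟪z, x⟫ = ‖y‖⁻¹ * f z := by
    intro z
    rw [hx, real_inner_smul_right, real_inner_comm, hyz]
  have hB_le : sSup ((fun t => ⟪t, x⟫) '' B) ≤ ‖y‖⁻¹ * c := by
    refine csSup_le (hBne.image _) ?_
    rintro m ⟨b, hb, rfl⟩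
    show ⟪b, x⟫ ≤ _
    rw [hinner b]
    exact mul_le_mul_of_nonneg_left (hfb b hb).le (inv_nonneg.mpr hypos.le)
  have hA_ge : ‖y‖⁻¹ * c < sSup ((fun t => ⟪t, x⟫) '' A) := by
    refine lt_of_lt_of_le ?_ (le_csSup (hAc.image (continuous_id.inner continuous_const)).bddAbove
      (Set.mem_image_of_mem _ ha))
    rw [hinner a]
    exact mul_lt_mul_of_pos_left hfa (inv_pos.mpr hypos)
  have := lt_of_lt_of_le hA_ge ((h x hxnorm).trans hB_le)
  exact lt_irrefl _ this

theorem eq_of_sSup_inner_eq {A B : Set E} (hAc : IsCompact A) (hBc : IsCompact B)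
    (hAv : Convex ℝ A) (hBv : Convex ℝ B) (hAne : A.Nonempty) (hBne : B.Nonempty)
    (h : ∀ x : E, ‖x‖ = 1 → sSup ((fun t => ⟪t, x⟫) '' A) = sSup ((fun t => ⟪t, x⟫) '' B)) :
    A = B := by
  apply Set.Subset.antisymm
  · exact subset_of_sSup_inner_le hBc hBv hAne hBne (fun x hx => (h x hx).le) hAc
  · exact subset_of_sSup_inner_le hAc hAv hBne hAne (fun x hx => (h x hx).ge) hBc

end Aux

theorem stmt13 {n : ℕ} (u v w : EuclideanSpace ℝ (Fin n) → ℝ)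
    (hu : IsFuzzyVector u) (hv : IsFuzzyVector v) (hw : IsFuzzyVector w) :
    (u = fuzzyAdd v w ↔
      ∀ α ∈ Set.Icc (0:ℝ) 1, levelSet u α = levelSet v α + levelSet w α) ∧
    (u = fuzzyAdd v w ↔
      ∀ α ∈ Set.Icc (0:ℝ) 1, ∀ x : EuclideanSpace ℝ (Fin n), ‖x‖ = 1 →
        fuzzySupp u α x = fuzzySupp v α x + fuzzySupp w α x) := by
  -- level sets of the fuzzy sum
  have hadd_level : ∀ α ∈ Set.Icc (0:ℝ) 1,
      levelSet (fuzzyAdd v w) α = levelSet v α + levelSet w α := by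
    rintro α ⟨hα0, hα1⟩
    rcases eq_or_lt_of_le hα0 with h0 | h0
    · simp only [levelSet, if_pos h0.symm]
      rw [fuzzyAdd_support hv hw, closure_add_of_compact hv.2.2.1 hw.2.2.1]
    · simp only [levelSet, if_neg h0.ne']
      exact fuzzyAdd_level hv hw h0
  have iff1 : u = fuzzyAdd v w ↔
      ∀ α ∈ Set.Icc (0:ℝ) 1, levelSet u α = levelSet v α + levelSet w α := by
    constructor
    · rintro rfl; exact hadd_level
    · intro h2
      funext t
      have ha := hu.1 t
      have hb := fuzzyAdd_mem_Icc hv hw t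
      have hiff : ∀ α : ℝ, 0 < α → α ≤ 1 → (α ≤ u t ↔ α ≤ fuzzyAdd v w t) := by
        intro α hpos hle
        have h1 : levelSet u α = {s | α ≤ u s} := by simp [levelSet, hpos.ne']
        have h2' := h2 α ⟨hpos.le, hle⟩
        have h3 := hadd_level α ⟨hpos.le, hle⟩
        have h4 : levelSet (fuzzyAdd v w) α = {s | α ≤ fuzzyAdd v w s} := by
          simp [levelSet, hpos.ne']
        constructor
        · intro h
          have : t ∈ levelSet u α := by rw [h1]; exact h
          rw [h2', ← h3, h4] at this
          exact this
        · intro h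
          have : t ∈ levelSet (fuzzyAdd v w) α := by rw [h4]; exact h
          rw [h3, ← h2', h1] at this
          exact this
      apply le_antisymm
      · by_contra hlt
        push_neg at hlt
        have := (hiff (u t) (lt_of_le_of_lt hb.1 hlt) ha.2).mp le_rfl
        exact absurd this (not_le.mpr hlt)
      · by_contra hlt
        push_neg at hlt
        have := (hiff (fuzzyAdd v w t) (lt_of_le_of_lt ha.1 hlt) hb.2).mpr le_rfl
        exact absurd this (not_le.mpr hlt)
  have iff2 : (∀ α ∈ Set.Icc (0:ℝ) 1, levelSet u α = levelSet v α + levelSet w α) ↔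
      ∀ α ∈ Set.Icc (0:ℝ) 1, ∀ x : EuclideanSpace ℝ (Fin n), ‖x‖ = 1 →
        fuzzySupp u α x = fuzzySupp v α x + fuzzySupp w α x := by
    constructor
    · rintro h2 α ⟨hα0, hα1⟩ x _
      have : fuzzySupp u α x = sSup ((fun t => ⟪t, x⟫) '' (levelSet v α + levelSet w α)) := by
        rw [fuzzySupp, h2 α ⟨hα0, hα1⟩]
      rw [this, sSup_inner_add (fv_levelSet_isCompact hv hα0) (fv_levelSet_isCompact hw hα0)
        (fv_levelSet_nonempty hv hα1) (fv_levelSet_nonempty hw hα1)]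
      rfl
    · rintro h3 α ⟨hα0, hα1⟩
      refine eq_of_sSup_inner_eq (fv_levelSet_isCompact hu hα0)
        ((fv_levelSet_isCompact hv hα0).add (fv_levelSet_isCompact hw hα0))
        (fv_levelSet_convex hu α)
        ((fv_levelSet_convex hv α).add (fv_levelSet_convex hw α))
        (fv_levelSet_nonempty hu hα1)
        ((fv_levelSet_nonempty hv hα1).add (fv_levelSet_nonempty hw hα1)) ?_
      intro x hx
      have h := h3 α ⟨hα0, hα1⟩ x hx
      rw [fuzzySupp, fuzzySupp, fuzzySupp] at h
      rw [h, ← sSup_inner_add (fv_levelSet_isCompact hv hα0) (fv_levelSet_isCompact hw hα0)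
        (fv_levelSet_nonempty hv hα1) (fv_levelSet_nonempty hw hα1)]
  exact ⟨iff1, iff1.trans iff2⟩
end
end

section
/- A fuzzy vector u on ℝⁿ is symmetric (i.e., u(t) = u(Qt) for all t ∈ ℝⁿ and all orthogonal matrices Q) if and only if for each α ∈ [0,1] the level set u_α is a closed ball centered at the origin, if and only if for each α ∈ [0,1] the support function h_u(α, −) : S^{n−1} → ℝ is a nonnegative constant function. -/
open scoped RealInnerProductSpace Pointwise

noncomputable section

lemma exists_isom' {n : ℕ} (s t : EuclideanSpace ℝ (Fin n)) (h : ‖s‖ = ‖t‖) :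
    ∃ Q : EuclideanSpace ℝ (Fin n) ≃ₗᵢ[ℝ] EuclideanSpace ℝ (Fin n), Q t = s :=
  ⟨Submodule.reflection (ℝ ∙ (t - s))ᗮ, Submodule.reflection_sub h.symm⟩

lemma ball_of_invariant' {n : ℕ} (K : Set (EuclideanSpace ℝ (Fin n)))
    (hne : K.Nonempty) (hK : IsCompact K) (hconv : Convex ℝ K)
    (hinv : ∀ Q : EuclideanSpace ℝ (Fin n) ≃ₗᵢ[ℝ] EuclideanSpace ℝ (Fin n),
      ∀ t, t ∈ K → Q t ∈ K) :
    ∃ r : ℝ, 0 ≤ r ∧ K = Metric.closedBall 0 r := by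
  obtain ⟨t0, ht0, hmax⟩ := hK.exists_isMaxOn hne continuous_norm.continuousOn
  rw [isMaxOn_iff] at hmax
  refine ⟨‖t0‖, norm_nonneg _, ?_⟩
  have hsphere : ∀ s : EuclideanSpace ℝ (Fin n), ‖s‖ = ‖t0‖ → s ∈ K := by
    intro s hs
    obtain ⟨Q, hQ⟩ := exists_isom' s t0 hs
    simpa [hQ] using hinv Q t0 ht0
  have hzero : (0 : EuclideanSpace ℝ (Fin n)) ∈ K := by
    have hneg : -t0 ∈ K := hsphere (-t0) (by simp)
    have := hconv ht0 hneg (by norm_num : (0:ℝ) ≤ 1/2) (by norm_num : (0:ℝ) ≤ 1/2)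
      (by norm_num)
    simpa using this
  ext y
  simp only [Metric.mem_closedBall, dist_zero_right]
  constructor
  · exact fun hy => hmax y hy
  · intro hy
    rcases eq_or_ne y 0 with rfl | hy0
    · exact hzero
    · have hyn : 0 < ‖y‖ := norm_pos_iff.mpr hy0
      have ht0n : 0 < ‖t0‖ := lt_of_lt_of_le hyn hy
      set s : EuclideanSpace ℝ (Fin n) := (‖t0‖ * ‖y‖⁻¹) • y with hsdef
      have hsK : s ∈ K := by
        apply hsphere
        rw [hsdef, norm_smul, Real.norm_eq_abs, abs_of_nonneg (by positivity)]
        field_simp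
      have ha0 : (0:ℝ) ≤ ‖y‖ / ‖t0‖ := by positivity
      have ha1 : ‖y‖ / ‖t0‖ ≤ 1 := by
        rw [div_le_one ht0n]; exact hy
      have := hconv (b := 1 - ‖y‖ / ‖t0‖) hsK hzero ha0 (by linarith) (by ring)
      have heq : (‖y‖ / ‖t0‖) • s + (1 - ‖y‖ / ‖t0‖) • (0:EuclideanSpace ℝ (Fin n)) = y := by
        rw [hsdef, smul_smul, smul_zero, add_zero]
        have : ‖y‖ / ‖t0‖ * (‖t0‖ * ‖y‖⁻¹) = 1 := by field_simp
        rw [this, one_smul]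
      rwa [heq] at this

lemma supp_ball' {n : ℕ} (r : ℝ) (hr : 0 ≤ r) (x : EuclideanSpace ℝ (Fin n))
    (hx : ‖x‖ = 1) :
    sSup ((fun t => ⟪t, x⟫) '' Metric.closedBall (0:EuclideanSpace ℝ (Fin n)) r) = r := by
  apply le_antisymm
  · apply csSup_le
    · exact ⟨⟪(0:EuclideanSpace ℝ (Fin n)), x⟫, ⟨0, by simpa using hr, rfl⟩⟩
    · rintro b ⟨t, ht, rfl⟩
      simp only [Metric.mem_closedBall, dist_zero_right] at ht
      calc ⟪t, x⟫ ≤ ‖t‖ * ‖x‖ := real_inner_le_norm t x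
        _ = ‖t‖ := by rw [hx, mul_one]
        _ ≤ r := ht
  · apply le_csSup
    · refine ⟨r, ?_⟩
      rintro b ⟨t, ht, rfl⟩
      simp only [Metric.mem_closedBall, dist_zero_right] at ht
      calc ⟪t, x⟫ ≤ ‖t‖ * ‖x‖ := real_inner_le_norm t x
        _ = ‖t‖ := by rw [hx, mul_one]
        _ ≤ r := ht
    · refine ⟨r • x, ?_, ?_⟩
      · simp [norm_smul, abs_of_nonneg hr, hx]
      · show ⟪r • x, x⟫ = r
        rw [real_inner_smul_left, real_inner_self_eq_norm_sq, hx]; ring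

lemma ball_of_supp' {n : ℕ} (K : Set (EuclideanSpace ℝ (Fin n))) (hne : K.Nonempty)
    (hK : IsCompact K) (hcl : IsClosed K) (hconv : Convex ℝ K) (c : ℝ) (hc0 : 0 ≤ c)
    (hc : ∀ x : EuclideanSpace ℝ (Fin n), ‖x‖ = 1 → sSup ((fun t => ⟪t, x⟫) '' K) = c) :
    K = Metric.closedBall 0 c := by
  have hbdd : ∀ x : EuclideanSpace ℝ (Fin n), BddAbove ((fun t => ⟪t, x⟫) '' K) := by
    intro x
    exact (hK.image (continuous_id.inner continuous_const)).bddAbove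
  ext y
  simp only [Metric.mem_closedBall, dist_zero_right]
  constructor
  · intro hy
    rcases eq_or_ne y 0 with rfl | hy0
    · simpa using hc0
    · have hyn : 0 < ‖y‖ := norm_pos_iff.mpr hy0
      have hxu : ‖(‖y‖⁻¹ • y : EuclideanSpace ℝ (Fin n))‖ = 1 := by
        rw [norm_smul, norm_inv, norm_norm]; field_simp
      have hmem : ⟪y, ‖y‖⁻¹ • y⟫ ∈ (fun t => ⟪t, ‖y‖⁻¹ • y⟫) '' K := ⟨y, hy, rfl⟩
      have := le_csSup (hbdd _) hmem
      rw [hc _ hxu] at this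
      have hval : ⟪y, (‖y‖⁻¹ • y : EuclideanSpace ℝ (Fin n))⟫ = ‖y‖ := by
        rw [real_inner_smul_right, real_inner_self_eq_norm_sq]
        field_simp
      linarith [hval ▸ this]
  · intro hy
    by_contra hyK
    obtain ⟨f, m, hfa, hmy⟩ := geometric_hahn_banach_closed_point hconv hcl hyK
    set v := (InnerProductSpace.toDual ℝ (EuclideanSpace ℝ (Fin n))).symm f with hv
    have hfv : ∀ t, ⟪v, t⟫ = f t := fun t => InnerProductSpace.toDual_symm_apply
    have hv0 : v ≠ 0 := by
      intro h
      obtain ⟨a, ha⟩ := hne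
      have h1 := hfa a ha
      have h2 : f a = 0 := by rw [← hfv a, h]; simp
      have h3 : f y = 0 := by rw [← hfv y, h]; simp
      linarith
    have hvn : 0 < ‖v‖ := norm_pos_iff.mpr hv0
    have hxu : ‖(‖v‖⁻¹ • v : EuclideanSpace ℝ (Fin n))‖ = 1 := by
      rw [norm_smul, norm_inv, norm_norm]; field_simp
    have hkey : c ≤ ‖v‖⁻¹ * m := by
      rw [← hc _ hxu]
      apply csSup_le (hne.image _)
      rintro b ⟨t, ht, rfl⟩
      show ⟪t, (‖v‖⁻¹ • v : EuclideanSpace ℝ (Fin n))⟫ ≤ ‖v‖⁻¹ * m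
      have heq : ⟪t, (‖v‖⁻¹ • v : EuclideanSpace ℝ (Fin n))⟫ = ‖v‖⁻¹ * f t := by
        rw [real_inner_smul_right, real_inner_comm, hfv]
      rw [heq]
      have := (hfa t ht).le
      have hpos : (0:ℝ) < ‖v‖⁻¹ := by positivity
      nlinarith [hfa t ht]
    have hbig : ⟪y, (‖v‖⁻¹ • v : EuclideanSpace ℝ (Fin n))⟫ = ‖v‖⁻¹ * f y := by
      rw [real_inner_smul_right, real_inner_comm, hfv]
    have hcs : ⟪y, (‖v‖⁻¹ • v : EuclideanSpace ℝ (Fin n))⟫ ≤ ‖y‖ := by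
      calc ⟪y, (‖v‖⁻¹ • v : EuclideanSpace ℝ (Fin n))⟫ ≤ ‖y‖ * ‖(‖v‖⁻¹ • v : EuclideanSpace ℝ (Fin n))‖ :=
        real_inner_le_norm _ _
        _ = ‖y‖ := by rw [hxu, mul_one]
    have hpos : (0:ℝ) < ‖v‖⁻¹ := by positivity
    nlinarith [hmy]

theorem stmt15 {n : ℕ} (u : EuclideanSpace ℝ (Fin n) → ℝ) (hu : IsFuzzyVector u) :
    ((∀ Q : EuclideanSpace ℝ (Fin n) ≃ₗᵢ[ℝ] EuclideanSpace ℝ (Fin n),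
        ∀ t, u (Q t) = u t) ↔
      (∀ α ∈ Set.Icc (0:ℝ) 1, ∃ r : ℝ, 0 ≤ r ∧
        levelSet u α = Metric.closedBall 0 r)) ∧
    ((∀ α ∈ Set.Icc (0:ℝ) 1, ∃ r : ℝ, 0 ≤ r ∧
        levelSet u α = Metric.closedBall 0 r) ↔
      (∀ α ∈ Set.Icc (0:ℝ) 1, ∃ c : ℝ, 0 ≤ c ∧
        ∀ x : EuclideanSpace ℝ (Fin n), ‖x‖ = 1 → fuzzySupp u α x = c)) := by
  obtain ⟨hrange, ⟨t1, ht1⟩, hcpt, hqc, hcl⟩ := hu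
  have hne : ∀ α ∈ Set.Icc (0:ℝ) 1, (levelSet u α).Nonempty := by
    intro α hα
    unfold levelSet
    split_ifs with h
    · exact ⟨t1, subset_closure (by simp [ht1])⟩
    · exact ⟨t1, by simp only [Set.mem_setOf_eq, ht1]; exact hα.2⟩
  have hcompact : ∀ α ∈ Set.Icc (0:ℝ) 1, IsCompact (levelSet u α) := by
    intro α hα
    unfold levelSet
    split_ifs with h
    · exact hcpt
    · refine hcpt.of_isClosed_subset (hcl α) ?_
      intro t ht
      exact subset_closure (lt_of_lt_of_le (lt_of_le_of_ne hα.1 (Ne.symm h)) ht)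
  have hclosed : ∀ α ∈ Set.Icc (0:ℝ) 1, IsClosed (levelSet u α) := by
    intro α hα
    unfold levelSet
    split_ifs with h
    · exact isClosed_closure
    · exact hcl α
  have hconvex : ∀ α : ℝ, Convex ℝ (levelSet u α) := by
    intro α
    unfold levelSet
    split_ifs with h
    · refine Convex.closure ?_
      intro x hx y hy a b ha hb hab
      have hb' : b = 1 - a := by linarith
      subst hb'
      exact lt_of_lt_of_le (lt_min hx hy) (hqc x y a ⟨ha, by linarith⟩)
    · intro x hx y hy a b ha hb hab
      have hb' : b = 1 - a := by linarith
      subst hb'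
      exact le_trans (le_min hx hy) (hqc x y a ⟨ha, by linarith⟩)
  have hAB : (∀ Q : EuclideanSpace ℝ (Fin n) ≃ₗᵢ[ℝ] EuclideanSpace ℝ (Fin n),
      ∀ t, u (Q t) = u t) →
      (∀ α ∈ Set.Icc (0:ℝ) 1, ∃ r : ℝ, 0 ≤ r ∧
        levelSet u α = Metric.closedBall 0 r) := by
    intro hA α hα
    apply ball_of_invariant' _ (hne α hα) (hcompact α hα) (hconvex α)
    intro Q t ht
    unfold levelSet at ht ⊢
    split_ifs at ht ⊢ with h
    · have hpre : Q ⁻¹' {t | 0 < u t} = {t | 0 < u t} := by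
        ext s
        simp [Set.mem_preimage, Set.mem_setOf_eq, hA Q s]
      have hkey : Q ⁻¹' closure {t | 0 < u t} = closure {t | 0 < u t} := by
        have := Q.toHomeomorph.preimage_closure {t | 0 < u t}
        rw [show (⇑Q.toHomeomorph) = ⇑Q from rfl] at this
        rw [this, hpre]
      rw [← hkey] at ht
      exact ht
    · show α ≤ u (Q t)
      rw [hA Q t]
      exact ht
  have hBA : (∀ α ∈ Set.Icc (0:ℝ) 1, ∃ r : ℝ, 0 ≤ r ∧
      levelSet u α = Metric.closedBall 0 r) →
      (∀ Q : EuclideanSpace ℝ (Fin n) ≃ₗᵢ[ℝ] EuclideanSpace ℝ (Fin n),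
        ∀ t, u (Q t) = u t) := by
    intro hB
    have step : ∀ Q : EuclideanSpace ℝ (Fin n) ≃ₗᵢ[ℝ] EuclideanSpace ℝ (Fin n),
        ∀ t, u t ≤ u (Q t) := by
      intro Q t
      rcases le_or_gt (u t) 0 with h | h
      · exact le_trans h (hrange (Q t)).1
      · obtain ⟨r, hr0, hr⟩ := hB (u t) ⟨h.le, (hrange t).2⟩
        have hmem : t ∈ levelSet u (u t) := by
          unfold levelSet
          rw [if_neg h.ne']
          exact Set.mem_setOf.mpr (le_refl (u t))
        rw [hr] at hmem
        simp only [Metric.mem_closedBall, dist_zero_right] at hmem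
        have hQm : Q t ∈ Metric.closedBall (0:EuclideanSpace ℝ (Fin n)) r := by
          simp only [Metric.mem_closedBall, dist_zero_right]
          simpa using hmem
        rw [← hr] at hQm
        unfold levelSet at hQm
        rw [if_neg h.ne'] at hQm
        exact hQm
    intro Q t
    refine le_antisymm ?_ (step Q t)
    simpa using step Q.symm (Q t)
  constructor
  · exact ⟨hAB, hBA⟩
  constructor
  · intro hB α hα
    obtain ⟨r, hr0, hr⟩ := hB α hα
    refine ⟨r, hr0, fun x hx => ?_⟩
    unfold fuzzySupp
    rw [hr]
    exact supp_ball' r hr0 x hx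
  · intro hC α hα
    obtain ⟨c, hc0, hcx⟩ := hC α hα
    refine ⟨c, hc0, ?_⟩
    exact ball_of_supp' _ (hne α hα) (hcompact α hα) (hclosed α hα) (hconvex α) c hc0
      (fun x hx => by simpa [fuzzySupp] using hcx x hx)
end
end

section
/- For a nonempty compact convex set A ⊆ ℝⁿ, the set Λ_A = {λ ≥ 0 : A = A_{−λ} + B_λ} of distances at which A has a regular inner parallel body is a closed interval [0, λ_A], where λ_A = sup Λ_A. In particular, A = A_{−λ_A} + B_{λ_A}, and if 0 ≤ λ′ < λ with λ ∈ Λ_A then λ′ ∈ Λ_A. -/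
open scoped RealInnerProductSpace Pointwise

noncomputable section

/-- The support function of a subset of ℝⁿ. -/
def suppFn {n : ℕ} (A : Set (EuclideanSpace ℝ (Fin n)))
    (x : EuclideanSpace ℝ (Fin n)) : ℝ :=
  sSup ((fun a => ⟪a, x⟫) '' A)

/-- The inner parallel body of `A` at distance `lam`:
`A₋λ = {t | t + B_λ ⊆ A}`. -/
def innerParallel {n : ℕ} (A : Set (EuclideanSpace ℝ (Fin n))) (lam : ℝ) :
    Set (EuclideanSpace ℝ (Fin n)) :=
  {t | ∀ b ∈ Metric.closedBall (0 : EuclideanSpace ℝ (Fin n)) lam, t + b ∈ A}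

/-- The set of distances at which `A` has a regular inner parallel body. -/
def regSet {n : ℕ} (A : Set (EuclideanSpace ℝ (Fin n))) : Set ℝ :=
  {lam | 0 ≤ lam ∧ A = innerParallel A lam + Metric.closedBall 0 lam}

/-- A convex body is irreducible if it has no non-trivial regular inner
parallel body. -/
def IrredBody {n : ℕ} (B : Set (EuclideanSpace ℝ (Fin n))) : Prop :=
  ∀ lam : ℝ, 0 ≤ lam →
    B = innerParallel B lam + Metric.closedBall 0 lam → lam = 0

open Filter Topology

section Aux

variable {n : ℕ}

lemma aux_sum_subset (A : Set (EuclideanSpace ℝ (Fin n))) (lam : ℝ) :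
    innerParallel A lam + Metric.closedBall 0 lam ⊆ A := by
  rintro x ⟨t, ht, b, hb, rfl⟩
  exact ht b hb

lemma aux_zero_mem (A : Set (EuclideanSpace ℝ (Fin n))) : (0 : ℝ) ∈ regSet A := by
  refine ⟨le_refl 0, ?_⟩
  have h1 : innerParallel A (0 : ℝ) = A := by
    ext t
    constructor
    · intro ht
      simpa using ht 0 (by simp)
    · intro ht b hb
      rw [Metric.closedBall_zero] at hb
      simp only [Set.mem_singleton_iff] at hb
      simpa [hb] using ht
  rw [h1, Metric.closedBall_zero]
  ext x
  simp [Set.mem_add]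

lemma aux_downward {A : Set (EuclideanSpace ℝ (Fin n))} {lam mu : ℝ}
    (hlam : lam ∈ regSet A) (h0 : 0 ≤ mu) (hle : mu ≤ lam) : mu ∈ regSet A := by
  obtain ⟨hl0, hA⟩ := hlam
  rcases eq_or_lt_of_le (h0.trans hle) with h | hpos
  · have : mu = 0 := le_antisymm (by rw [h]; exact hle) h0
    rw [this]; exact aux_zero_mem A
  refine ⟨h0, Set.Subset.antisymm ?_ (aux_sum_subset A mu)⟩
  intro a ha
  rw [hA] at ha
  obtain ⟨t, ht, b, hb, rfl⟩ := ha
  rw [mem_closedBall_zero_iff] at hb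
  refine ⟨t + ((lam - mu) / lam) • b, ?_, (mu / lam) • b, ?_, ?_⟩
  · intro c hc
    rw [mem_closedBall_zero_iff] at hc
    have hmem : t + (((lam - mu) / lam) • b + c) ∈ A := by
      apply ht
      rw [mem_closedBall_zero_iff]
      have h1 : ‖((lam - mu) / lam) • b + c‖ ≤ ‖((lam - mu) / lam) • b‖ + ‖c‖ :=
        norm_add_le _ _
      have h2 : ‖((lam - mu) / lam) • b‖ = ((lam - mu) / lam) * ‖b‖ := by
        rw [norm_smul, Real.norm_eq_abs,
          abs_of_nonneg (div_nonneg (by linarith) hpos.le)]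
      have h3 : ((lam - mu) / lam) * ‖b‖ ≤ ((lam - mu) / lam) * lam := by
        apply mul_le_mul_of_nonneg_left hb (div_nonneg (by linarith) hpos.le)
      have h4 : ((lam - mu) / lam) * lam = lam - mu := by field_simp
      linarith
    simpa [add_assoc] using hmem
  · rw [mem_closedBall_zero_iff, norm_smul, Real.norm_eq_abs,
      abs_of_nonneg (div_nonneg h0 hpos.le)]
    calc mu / lam * ‖b‖ ≤ mu / lam * lam := by
          apply mul_le_mul_of_nonneg_left hb (div_nonneg h0 hpos.le)
      _ = mu := by field_simp
  · show t + ((lam - mu) / lam) • b + (mu / lam) • b = t + b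
    rw [add_assoc, ← add_smul]
    have h5 : (lam - mu) / lam + mu / lam = 1 := by field_simp; ring
    rw [h5, one_smul]

lemma aux_bddAbove {A : Set (EuclideanSpace ℝ (Fin n))} (hn : 0 < n)
    (hne : A.Nonempty) (hcomp : IsCompact A) : BddAbove (regSet A) := by
  refine ⟨Metric.diam A, ?_⟩
  rintro lam ⟨h0, hA⟩
  obtain ⟨a, ha⟩ := hne
  rw [hA] at ha
  obtain ⟨t, ht, b, hb, rfl⟩ := ha
  set e : EuclideanSpace ℝ (Fin n) := EuclideanSpace.single ⟨0, hn⟩ 1 with he_def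
  have he : ‖e‖ = 1 := by simp [he_def]
  have h1 : t ∈ A := by simpa using ht 0 (by simp [h0])
  have h2 : t + lam • e ∈ A := by
    apply ht
    rw [mem_closedBall_zero_iff, norm_smul, Real.norm_eq_abs, he,
      abs_of_nonneg h0, mul_one]
  have hd := Metric.dist_le_diam_of_mem hcomp.isBounded h1 h2
  rw [dist_eq_norm] at hd
  have : ‖t - (t + lam • e)‖ = lam := by
    have : t - (t + lam • e) = -(lam • e) := by abel
    rw [this, norm_neg, norm_smul, Real.norm_eq_abs, he, abs_of_nonneg h0, mul_one]
  linarith [this ▸ hd]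

lemma aux_sSup_mem {A : Set (EuclideanSpace ℝ (Fin n))} (hn : 0 < n)
    (hne : A.Nonempty) (hcomp : IsCompact A) : sSup (regSet A) ∈ regSet A := by
  have hbdd := aux_bddAbove hn hne hcomp
  set s := sSup (regSet A) with hs_def
  have h0s : (0 : ℝ) ≤ s := le_csSup hbdd (aux_zero_mem A)
  rcases eq_or_lt_of_le h0s with h | hpos
  · rw [← h]; exact aux_zero_mem A
  refine ⟨h0s, Set.Subset.antisymm ?_ (aux_sum_subset A s)⟩
  obtain ⟨u, hu_mono, hu_tend, hu_mem⟩ :=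
    exists_seq_tendsto_sSup ⟨0, aux_zero_mem A⟩ hbdd
  intro a ha
  have hu_le : ∀ k, u k ≤ s := fun k => le_csSup hbdd (hu_mem k)
  have hpick : ∀ k, ∃ t, t ∈ innerParallel A (u k) ∧ ‖a - t‖ ≤ u k := by
    intro k
    have ha' : a ∈ innerParallel A (u k) + Metric.closedBall 0 (u k) :=
      (hu_mem k).2 ▸ ha
    obtain ⟨t, ht, b, hb, hab⟩ := ha'
    rw [mem_closedBall_zero_iff] at hb
    exact ⟨t, ht, by rw [← hab]; simpa using hb⟩
  choose t htIP htnorm using hpick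
  have htA : ∀ k, t k ∈ A := fun k => by
    simpa using htIP k 0 (by simp [(hu_mem k).1])
  obtain ⟨tl, htl, φ, hφ, hconv⟩ := hcomp.tendsto_subseq htA
  have huφ : Tendsto (fun k => u (φ k)) atTop (𝓝 s) :=
    hu_tend.comp hφ.tendsto_atTop
  refine ⟨tl, ?_, a - tl, ?_, by show tl + (a - tl) = a; abel⟩
  · intro c hc
    rw [mem_closedBall_zero_iff] at hc
    have key : Tendsto (fun k => t (φ k) + (u (φ k) / s) • c) atTop (𝓝 (tl + c)) := by
      have h1 : Tendsto (fun k => (u (φ k) / s) • c) atTop (𝓝 c) := by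
        have h2 : Tendsto (fun k => u (φ k) / s) atTop (𝓝 1) := by
          have := huφ.div_const s
          simpa [div_self hpos.ne'] using this
        have := h2.smul_const c
        simpa using this
      exact hconv.add h1
    refine hcomp.isClosed.mem_of_tendsto key (Filter.Eventually.of_forall fun k => ?_)
    apply htIP (φ k)
    rw [mem_closedBall_zero_iff, norm_smul, Real.norm_eq_abs,
      abs_of_nonneg (div_nonneg (hu_mem (φ k)).1 h0s)]
    calc u (φ k) / s * ‖c‖ ≤ u (φ k) / s * s := by
          apply mul_le_mul_of_nonneg_left hc (div_nonneg (hu_mem (φ k)).1 h0s)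
      _ = u (φ k) := by field_simp
  · rw [mem_closedBall_zero_iff]
    have hnorm : Tendsto (fun k => ‖a - t (φ k)‖) atTop (𝓝 ‖a - tl‖) :=
      (tendsto_const_nhds.sub hconv).norm
    exact le_of_tendsto hnorm (Filter.Eventually.of_forall fun k =>
      (htnorm (φ k)).trans (hu_le (φ k)))

end Aux

theorem stmt17 {n : ℕ} (hn : 0 < n) (A : Set (EuclideanSpace ℝ (Fin n)))
    (hne : A.Nonempty) (hcomp : IsCompact A) (hconv : Convex ℝ A) :
    regSet A = Set.Icc 0 (sSup (regSet A)) ∧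
    A = innerParallel A (sSup (regSet A)) +
      Metric.closedBall 0 (sSup (regSet A)) := by
  have hbdd := aux_bddAbove hn hne hcomp
  have hsup := aux_sSup_mem hn hne hcomp
  constructor
  · ext lam
    constructor
    · intro hlam
      exact ⟨hlam.1, le_csSup hbdd hlam⟩
    · rintro ⟨h0, hle⟩
      exact aux_downward hsup h0 hle
  · exact hsup.2
end
end

section
/- Let u be a fuzzy vector on ℝⁿ whose 0-level set u_0 is an irreducible convex body. Then u is skew: whenever u = v ⊕ w with w a symmetric fuzzy vector, w must be the crisp fuzzy vector concentrated at the origin (w(o) = 1 and w(t) = 0 for t ≠ o). -/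
open scoped RealInnerProductSpace Pointwise

noncomputable section

open Classical in
open Classical in
theorem stmt19 {n : ℕ} (u : EuclideanSpace ℝ (Fin n) → ℝ)
    (hu : IsFuzzyVector u) (hirr : IrredBody (levelSet u 0)) :
    ∀ v w : EuclideanSpace ℝ (Fin n) → ℝ,
      IsFuzzyVector v → IsFuzzyVector w →
      (∀ α ∈ Set.Icc (0:ℝ) 1, ∃ lam : ℝ, 0 ≤ lam ∧
        levelSet w α = Metric.closedBall 0 lam) →
      u = fuzzyAdd v w →
      ∀ t, w t = if t = (0 : EuclideanSpace ℝ (Fin n)) then 1 else 0 := by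
  intro v w hv hw hsym huvw
  -- the set defining fuzzyAdd
  set S : EuclideanSpace ℝ (Fin n) → Set ℝ :=
    fun t => {m : ℝ | ∃ r s, r + s = t ∧ m = min (v r) (w s)} with hS
  have hSne : ∀ t, (S t).Nonempty := fun t => ⟨min (v t) (w 0), t, 0, add_zero t, rfl⟩
  have hSbdd : ∀ t, BddAbove (S t) := by
    intro t
    refine ⟨1, ?_⟩
    rintro m ⟨r, s, -, rfl⟩
    exact (min_le_left _ _).trans (hv.1 r).2
  have hut : ∀ t, u t = sSup (S t) := fun t => congrFun huvw t
  -- support of u = support of v + support of w (as sets, before closure)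
  have hsupp : {t | 0 < u t} ⊆ {t | 0 < v t} + {t | 0 < w t} := by
    intro t ht
    have h0 : 0 < sSup (S t) := by rw [← hut]; exact ht
    by_contra hc
    have : ∀ m ∈ S t, m ≤ 0 := by
      rintro m ⟨r, s, hrs, rfl⟩
      by_contra hm
      push_neg at hm
      exact hc ⟨r, lt_of_lt_of_le hm (min_le_left _ _), s,
        lt_of_lt_of_le hm (min_le_right _ _), hrs⟩
    exact absurd (csSup_le (hSne t) this) (not_le.mpr h0)
  have hsupp' : {t | 0 < v t} + {t | 0 < w t} ⊆ {t | 0 < u t} := by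
    rintro t ⟨r, hr, s, hs, rfl⟩
    have : min (v r) (w s) ≤ u (r + s) := by
      rw [hut]; exact le_csSup (hSbdd _) ⟨r, s, rfl, rfl⟩
    exact lt_of_lt_of_le (lt_min hr hs) this
  -- level-0 sets
  have hclosed : IsClosed (closure {t | 0 < v t} + closure {t | 0 < w t}) :=
    (hv.2.2.1.add hw.2.2.1).isClosed
  have hlevel : levelSet u 0 = levelSet v 0 + levelSet w 0 := by
    simp only [levelSet, if_pos rfl]
    apply Set.Subset.antisymm
    · refine closure_minimal ?_ hclosed
      exact hsupp.trans (Set.add_subset_add subset_closure subset_closure)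
    · rintro t ⟨r, hr, s, hs, rfl⟩
      exact map_mem_closure₂ continuous_add hr hs
        (fun x hx y hy => hsupp' (Set.add_mem_add hx hy))
  -- get the ball for α = 0
  obtain ⟨lam, hlam0, hball⟩ := hsym 0 ⟨le_refl 0, zero_le_one⟩
  -- irreducibility: lam = 0
  have hlam : lam = 0 := by
    apply hirr lam hlam0
    apply Set.Subset.antisymm
    · rw [hlevel, hball]
      refine Set.add_subset_add ?_ (subset_refl _)
      intro x hx b hb
      exact Set.add_mem_add hx hb
    · rintro t ⟨x, hx, b, hb, rfl⟩
      exact hx b hb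
  -- conclude
  have hw0 : closure {t | 0 < w t} = {(0 : EuclideanSpace ℝ (Fin n))} := by
    have := hball
    rw [hlam, Metric.closedBall_zero] at this
    simpa [levelSet] using this
  intro t
  by_cases ht : t = 0
  · subst ht
    obtain ⟨t₀, ht₀⟩ := hw.2.1
    have : t₀ ∈ closure {t | 0 < w t} :=
      subset_closure (by simp [Set.mem_setOf_eq, ht₀])
    rw [hw0, Set.mem_singleton_iff] at this
    rw [if_pos rfl, ← this, ht₀]
  · rw [if_neg ht]
    by_contra hne
    have hpos : 0 < w t := lt_of_le_of_ne (hw.1 t).1 (Ne.symm hne)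
    have : t ∈ closure {t | 0 < w t} := subset_closure hpos
    rw [hw0, Set.mem_singleton_iff] at this
    exact ht this
end
end
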